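/- arXiv:1106.2458 — 5 statements merged into one kernel-verified Lean document; each statement's English description precedes it below -/
import Mathlib

section
/- The number of triangulations of a convex (n+2)-gon equals the Catalan number C_n = (1/(n+1)) * binomial(2n, n). -/
/-- `(a,b)` is a diagonal of the convex `n`-gon with vertices `0, …, n-1`. -/
def IsDiagonal (n a b : ℕ) : Prop :=
  a + 2 ≤ b ∧ b ≤ n - 1 ∧ ¬(a = 0 ∧ b = n - 1)

/-- Two diagonals (as ordered pairs, smaller endpoint first) cross each other. -/
def Crossing (p q : ℕ × ℕ) : Prop :=
  (p.1 < q.1 ∧ q.1 < p.2 ∧ p.2 < q.2) ∨ (q.1 < p.1 ∧ p.1 < q.2 ∧ q.2 < p.2)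

/-- A triangulation of the convex `n`-gon: a set of `n - 3` pairwise
non-crossing diagonals (equivalently, a maximal non-crossing set of diagonals). -/
def IsTriangulation (n : ℕ) (T : Finset (ℕ × ℕ)) : Prop :=
  (∀ p ∈ T, IsDiagonal n p.1 p.2) ∧
  (∀ p ∈ T, ∀ q ∈ T, ¬ Crossing p q) ∧
  T.card = n - 3

open Finset

-- auxiliary definitions for the Catalan recursion
def shiftp (k : ℕ) (p : ℕ × ℕ) : ℕ × ℕ := (p.1 + k, p.2 + k)

def extra (n k : ℕ) : Finset (ℕ × ℕ) :=
  (if 2 ≤ k then {((0:ℕ), k)} else ∅) ∪ (if k ≤ n then {(k, n+2)} else ∅)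

def combine (n i : ℕ) (pr : Finset (ℕ × ℕ) × Finset (ℕ × ℕ)) : Finset (ℕ × ℕ) :=
  pr.1 ∪ pr.2.image (shiftp (i+1)) ∪ extra n (i+1)

lemma mem_ite_singleton {c : Prop} [Decidable c] {x p : ℕ × ℕ} :
    p ∈ (if c then ({x} : Finset (ℕ × ℕ)) else ∅) ↔ c ∧ p = x := by
  split_ifs with h <;> simp [h]

lemma mem_combine {n i : ℕ} {T1 T2 : Finset (ℕ × ℕ)} {p : ℕ × ℕ} :
    p ∈ combine n i (T1, T2) ↔
      p ∈ T1 ∨ (∃ q ∈ T2, shiftp (i+1) q = p) ∨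
      (2 ≤ i+1 ∧ p = (0, i+1)) ∨ (i+1 ≤ n ∧ p = (i+1, n+2)) := by
  simp only [combine, extra, Finset.mem_union, Finset.mem_image, mem_ite_singleton]
  exact or_assoc

lemma combine_isTri {n i : ℕ} (hi : i ≤ n) {T1 T2 : Finset (ℕ × ℕ)}
    (h1 : IsTriangulation (i+2) T1) (h2 : IsTriangulation (n-i+2) T2) :
    IsTriangulation (n+3) (combine n i (T1, T2)) := by
  obtain ⟨hd1, hc1, hcard1⟩ := h1
  obtain ⟨hd2, hc2, hcard2⟩ := h2
  have hb1 : ∀ p ∈ T1, p.1 + 2 ≤ p.2 ∧ p.2 ≤ i + 1 ∧ ¬(p.1 = 0 ∧ p.2 = i+1) := by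
    intro p hp; have := hd1 p hp; simp only [IsDiagonal] at this; omega
  have hb2 : ∀ p ∈ T2, p.1 + 2 ≤ p.2 ∧ p.2 ≤ n-i+1 ∧ ¬(p.1 = 0 ∧ p.2 = n-i+1) := by
    intro p hp; have := hd2 p hp; simp only [IsDiagonal] at this; omega
  refine ⟨?_, ?_, ?_⟩
  · intro p hp
    simp only [IsDiagonal]
    rcases mem_combine.1 hp with h | ⟨q, hq, h⟩ | ⟨h, h'⟩ | ⟨h, h'⟩
    · have := hb1 p h; omega
    · have := hb2 q hq
      have e1 : p.1 = q.1 + (i+1) := by subst h; rfl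
      have e2 : p.2 = q.2 + (i+1) := by subst h; rfl
      omega
    · have e1 : p.1 = 0 := by subst h'; rfl
      have e2 : p.2 = i+1 := by subst h'; rfl
      omega
    · have e1 : p.1 = i+1 := by subst h'; rfl
      have e2 : p.2 = n+2 := by subst h'; rfl
      omega
  · intro p hp q hq
    have getp : ∀ p, p ∈ combine n i (T1, T2) → p ∉ T1 → (¬ ∃ r ∈ T2, shiftp (i+1) r = p) →
        (p.1 = 0 ∧ p.2 = i+1) ∨ (p.1 = i+1 ∧ p.2 = n+2) := by
      intro p hp h1 h2
      rcases mem_combine.1 hp with h | h | ⟨h, h'⟩ | ⟨h, h'⟩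
      · exact absurd h h1
      · exact absurd h h2
      · exact Or.inl ⟨by subst h'; rfl, by subst h'; rfl⟩
      · exact Or.inr ⟨by subst h'; rfl, by subst h'; rfl⟩
    -- classify p
    by_cases hpT1 : p ∈ T1 <;> by_cases hqT1 : q ∈ T1
    · exact hc1 p hpT1 q hqT1
    all_goals by_cases hpSh : ∃ r ∈ T2, shiftp (i+1) r = p
    all_goals try by_cases hqSh : ∃ s ∈ T2, shiftp (i+1) s = q
    all_goals simp only [Crossing]
    all_goals try obtain ⟨r, hr, hrp⟩ := hpSh
    all_goals try obtain ⟨s, hs, hsq⟩ := hqSh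
    all_goals try (have ep1 : p.1 = r.1 + (i+1) := by subst hrp; rfl)
    all_goals try (have ep2 : p.2 = r.2 + (i+1) := by subst hrp; rfl)
    all_goals try (have eq1 : q.1 = s.1 + (i+1) := by subst hsq; rfl)
    all_goals try (have eq2 : q.2 = s.2 + (i+1) := by subst hsq; rfl)
    all_goals try (have hbr := hb2 r hr)
    all_goals try (have hbs := hb2 s hs)
    all_goals try (have hap := hb1 p hpT1)
    all_goals try (have haq := hb1 q hqT1)
    all_goals try (have hgp := getp p hp hpT1 hpSh)
    all_goals try (have hgq := getp q hq hqT1 hqSh)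
    -- shift-shift case needs h2's noncrossing
    all_goals try (have hcross := hc2 r hr s hs; simp only [Crossing] at hcross)
    all_goals omega
  · -- cardinality
    have hdisj1 : Disjoint (T1 ∪ T2.image (shiftp (i+1))) (extra n (i+1)) := by
      rw [Finset.disjoint_left]
      intro p hp hpe
      simp only [extra, Finset.mem_union, mem_ite_singleton] at hpe
      have hco : (p.1 = 0 ∧ p.2 = i+1) ∨ (p.1 = i+1 ∧ p.2 = n+2) := by
        rcases hpe with ⟨h, h'⟩ | ⟨h, h'⟩
        · exact Or.inl ⟨by subst h'; rfl, by subst h'; rfl⟩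
        · exact Or.inr ⟨by subst h'; rfl, by subst h'; rfl⟩
      rcases Finset.mem_union.1 hp with h | h
      · have := hb1 p h; omega
      · obtain ⟨r, hr, hrp⟩ := Finset.mem_image.1 h
        have e1 : p.1 = r.1 + (i+1) := by subst hrp; rfl
        have e2 : p.2 = r.2 + (i+1) := by subst hrp; rfl
        have := hb2 r hr
        omega
    have hdisj2 : Disjoint T1 (T2.image (shiftp (i+1))) := by
      rw [Finset.disjoint_left]
      intro p hp hq
      obtain ⟨r, hr, hrp⟩ := Finset.mem_image.1 hq
      have e1 : p.1 = r.1 + (i+1) := by subst hrp; rfl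
      have ha := hb1 p hp
      have hb := hb2 r hr
      omega
    have hinj : Set.InjOn (shiftp (i+1)) T2 := by
      intro a _ b _ hab
      have e1 : a.1 + (i+1) = b.1 + (i+1) := congrArg Prod.fst hab
      have e2 : a.2 + (i+1) = b.2 + (i+1) := congrArg Prod.snd hab
      exact Prod.ext (by omega) (by omega)
    have hext : (extra n (i+1)).card = (if 2 ≤ i+1 then 1 else 0) + (if i+1 ≤ n then 1 else 0) := by
      rw [extra, Finset.card_union_of_disjoint]
      · split_ifs <;> simp
      · rw [Finset.disjoint_left]
        intro p hp hq
        rw [mem_ite_singleton] at hp hq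
        have e1 : p.1 = 0 := by rw [hp.2]
        have e2 : p.1 = i+1 := by rw [hq.2]
        omega
    rw [combine]
    rw [Finset.card_union_of_disjoint hdisj1, Finset.card_union_of_disjoint hdisj2,
      Finset.card_image_of_injOn hinj, hcard1, hcard2, hext]
    split_ifs <;> omega

theorem card_le_of_noncross {m : ℕ} {T : Finset (ℕ × ℕ)}
    (hd : ∀ p ∈ T, p.1 + 2 ≤ p.2 ∧ p.2 ≤ m - 1)
    (hnc : ∀ p ∈ T, ∀ q ∈ T, ¬ Crossing p q) :
    T.card ≤ m - 2 := by
  classical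
  set S : ℕ × ℕ → Finset ℕ := fun p =>
    insert (p.2 - 1) ((T.filter (fun q => q.2 = p.2 ∧ p.1 < q.1)).image Prod.fst) with hS
  have hSne : ∀ p, (S p).Nonempty := fun p => insert_nonempty _ _
  set φ : ℕ × ℕ → ℕ := fun p => (S p).min' (hSne p) with hφ
  have hmemS : ∀ p x, x ∈ S p ↔ x = p.2 - 1 ∨ ∃ q ∈ T, q.2 = p.2 ∧ p.1 < q.1 ∧ q.1 = x := by
    intro p x
    simp only [hS, Finset.mem_insert, Finset.mem_image, Finset.mem_filter]
    constructor
    · rintro (h | ⟨q, ⟨hq, h1, h2⟩, h3⟩)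
      · exact Or.inl h
      · exact Or.inr ⟨q, hq, h1, h2, h3⟩
    · rintro (h | ⟨q, hq, h1, h2, h3⟩)
      · exact Or.inl h
      · exact Or.inr ⟨q, ⟨hq, h1, h2⟩, h3⟩
  have hub : ∀ p, φ p ≤ p.2 - 1 := by
    intro p
    exact Finset.min'_le _ _ (by simp [hS])
  have hlb : ∀ p ∈ T, p.1 < φ p := by
    intro p hp
    have h2 := (hd p hp).1
    have : ∀ x ∈ S p, p.1 < x := by
      intro x hx
      rcases (hmemS p x).1 hx with h | ⟨q, hq, h1, h2, h3⟩
      · omega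
      · omega
    exact this _ (Finset.min'_mem _ _)
  have hchar : ∀ p, φ p = p.2 - 1 ∨ ∃ q ∈ T, q.2 = p.2 ∧ p.1 < q.1 ∧ q.1 = φ p :=
    fun p => (hmemS p (φ p)).1 (Finset.min'_mem _ _)
  have hinj : Set.InjOn φ T := by
    intro p hp q hq heq
    by_contra hne
    -- auxiliary: same second coordinate, p.1 < q.1 gives φ p < φ q is impossible... derive
    have key : ∀ p ∈ T, ∀ q ∈ T, φ p = φ q → p.2 < q.2 → False := by
      intro p hp q hq heq hlt
      have h1 : φ q ≤ p.2 - 1 := heq ▸ hub p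
      have hp2 : p.1 + 2 ≤ p.2 := (hd p hp).1
      have hq2 : q.1 + 2 ≤ q.2 := (hd q hq).1
      have : φ q ≠ q.2 - 1 := by omega
      rcases hchar q with h | ⟨r, hr, hr1, hr2, hr3⟩
      · exact this h
      · -- r crosses p
        apply hnc p hp r hr
        have hpφ : p.1 < φ p := hlb p hp
        left
        refine ⟨by omega, by omega, by omega⟩
    have key2 : ∀ p ∈ T, ∀ q ∈ T, p.2 = q.2 → p.1 < q.1 → φ p < φ q := by
      intro p hp q hq h2 h1
      have : q.1 ∈ S p := by
        rw [hmemS]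
        exact Or.inr ⟨q, hq, h2.symm, h1, rfl⟩
      have h4 : φ p ≤ q.1 := Finset.min'_le _ _ this
      have h5 := hlb q hq
      omega
    rcases Nat.lt_trichotomy p.2 q.2 with h | h | h
    · exact key p hp q hq heq h
    · rcases Nat.lt_trichotomy p.1 q.1 with h1 | h1 | h1
      · have := key2 p hp q hq h h1; omega
      · exact hne (Prod.ext h1 h)
      · have := key2 q hq p hp h.symm h1; omega
    · exact key q hq p hp heq.symm h
  calc T.card ≤ (Finset.Icc 1 (m-2)).card := by
        apply Finset.card_le_card_of_injOn φ _ hinj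
        intro p hp
        have h1 := hlb p hp
        have h2 := hub p
        have h3 := hd p hp
        simp only [Finset.mem_coe, Finset.mem_Icc]
        omega
    _ = m - 2 := by rw [Nat.card_Icc]; omega


-- helpers for crossing with explicit pairs
lemma crossing_left {a b : ℕ} {q : ℕ × ℕ} :
    Crossing (a, b) q ↔ ((a < q.1 ∧ q.1 < b ∧ b < q.2) ∨ (q.1 < a ∧ a < q.2 ∧ q.2 < b)) :=
  Iff.rfl

lemma crossing_right {c d : ℕ} {p : ℕ × ℕ} :
    Crossing p (c, d) ↔ ((p.1 < c ∧ c < p.2 ∧ p.2 < d) ∨ (c < p.1 ∧ p.1 < d ∧ d < p.2)) :=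
  Iff.rfl

theorem card_le_of_diag_noncross {m : ℕ} {T : Finset (ℕ × ℕ)}
    (hd : ∀ p ∈ T, IsDiagonal m p.1 p.2)
    (hnc : ∀ p ∈ T, ∀ q ∈ T, ¬ Crossing p q) :
    T.card ≤ m - 3 := by
  classical
  by_cases hm : 3 ≤ m
  · have hnotmem : (0, m-1) ∉ T := by
      intro h
      have := hd _ h
      simp [IsDiagonal] at this
    have h := card_le_of_noncross (T := insert (0, m-1) T) (m := m) ?_ ?_
    · rw [Finset.card_insert_of_notMem hnotmem] at h
      omega
    · intro p hp
      rcases Finset.mem_insert.1 hp with h | h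
      · subst h; constructor
        · show 0 + 2 ≤ m - 1; omega
        · show m - 1 ≤ m - 1; omega
      · exact ⟨(hd p h).1, (hd p h).2.1⟩
    · intro p hp q hq
      have edge : ∀ r ∈ T, ¬ Crossing (0, m-1) r ∧ ¬ Crossing r (0, m-1) := by
        intro r hr
        have := hd r hr
        simp only [IsDiagonal] at this
        rw [crossing_left, crossing_right]
        omega
      rcases Finset.mem_insert.1 hp with h1 | h1 <;> rcases Finset.mem_insert.1 hq with h2 | h2
      · subst h1; subst h2; rw [crossing_left]; omega
      · subst h1; exact (edge q h2).1
      · subst h2; exact (edge p h1).2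
      · exact hnc p h1 q h2
  · have : T = ∅ := by
      apply Finset.eq_empty_of_forall_notMem
      intro p hp
      have := hd p hp
      simp only [IsDiagonal] at this
      omega
    simp [this]

/-- maximality: a free vertex `k` must be connected to `0` (if `k ≥ 2`). -/
lemma free_mem_left {n : ℕ} {T : Finset (ℕ × ℕ)} (hT : IsTriangulation (n+3) T)
    {k : ℕ} (hk1 : 2 ≤ k) (hk2 : k ≤ n+1)
    (hfree : ∀ p ∈ T, ¬(p.1 < k ∧ k < p.2)) : (0, k) ∈ T := by
  classical
  by_contra h
  have hcard := card_le_of_diag_noncross (m := n+3) (T := insert (0,k) T) ?_ ?_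
  · rw [Finset.card_insert_of_notMem h, hT.2.2] at hcard
    omega
  · intro p hp
    rcases Finset.mem_insert.1 hp with h1 | h1
    · subst h1
      refine ⟨by omega, by show k ≤ n+3-1; omega, by show ¬(0 = 0 ∧ k = n+3-1); omega⟩
    · exact hT.1 p h1
  · intro p hp q hq
    have edge : ∀ r ∈ T, ¬ Crossing (0, k) r ∧ ¬ Crossing r (0, k) := by
      intro r hr
      have h1 := hT.1 r hr
      have h2 := hfree r hr
      simp only [IsDiagonal] at h1
      rw [crossing_left, crossing_right]
      omega
    rcases Finset.mem_insert.1 hp with h1 | h1 <;> rcases Finset.mem_insert.1 hq with h2 | h2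
    · subst h1; subst h2; rw [crossing_left]; omega
    · subst h1; exact (edge q h2).1
    · subst h2; exact (edge p h1).2
    · exact hT.2.1 p h1 q h2

lemma free_mem_right {n : ℕ} {T : Finset (ℕ × ℕ)} (hT : IsTriangulation (n+3) T)
    {k : ℕ} (hk1 : 1 ≤ k) (hk2 : k ≤ n)
    (hfree : ∀ p ∈ T, ¬(p.1 < k ∧ k < p.2)) : (k, n+2) ∈ T := by
  classical
  by_contra h
  have hcard := card_le_of_diag_noncross (m := n+3) (T := insert (k, n+2) T) ?_ ?_
  · rw [Finset.card_insert_of_notMem h, hT.2.2] at hcard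
    omega
  · intro p hp
    rcases Finset.mem_insert.1 hp with h1 | h1
    · subst h1
      refine ⟨by omega, by show n+2 ≤ n+3-1; omega, by show ¬(k = 0 ∧ n+2 = n+3-1); omega⟩
    · exact hT.1 p h1
  · intro p hp q hq
    have edge : ∀ r ∈ T, ¬ Crossing (k, n+2) r ∧ ¬ Crossing r (k, n+2) := by
      intro r hr
      have h1 := hT.1 r hr
      have h2 := hfree r hr
      simp only [IsDiagonal] at h1
      rw [crossing_left, crossing_right]
      omega
    rcases Finset.mem_insert.1 hp with h1 | h1 <;> rcases Finset.mem_insert.1 hq with h2 | h2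
    · subst h1; subst h2; rw [crossing_left]; omega
    · subst h1; exact (edge q h2).1
    · subst h2; exact (edge p h1).2
    · exact hT.2.1 p h1 q h2

/-- Existence of a free vertex: apex of the triangle over the edge (0, n+2). -/
lemma exists_free {n : ℕ} {T : Finset (ℕ × ℕ)} (hT : IsTriangulation (n+3) T) :
    ∃ k, 1 ≤ k ∧ k ≤ n+1 ∧ (∀ p ∈ T, ¬(p.1 < k ∧ k < p.2)) := by
  classical
  have hb : ∀ p ∈ T, p.1 + 2 ≤ p.2 ∧ p.2 ≤ n+2 ∧ ¬(p.1 = 0 ∧ p.2 = n+2) := by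
    intro p hp
    have := hT.1 p hp
    simp only [IsDiagonal] at this
    omega
  set A : Finset ℕ := (T.filter (fun p => p.2 = n+2)).image Prod.fst with hA
  set B : Finset ℕ := (T.filter (fun p => p.1 = 0)).image Prod.snd with hB
  have hmemA : ∀ x, x ∈ A ↔ (x, n+2) ∈ T := by
    intro x
    simp only [hA, Finset.mem_image, Finset.mem_filter]
    constructor
    · rintro ⟨p, ⟨hp, h2⟩, h1⟩
      have : p = (x, n+2) := Prod.ext h1 h2
      rwa [this] at hp
    · intro h
      exact ⟨(x, n+2), ⟨h, rfl⟩, rfl⟩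
  have hmemB : ∀ x, x ∈ B ↔ (0, x) ∈ T := by
    intro x
    simp only [hB, Finset.mem_image, Finset.mem_filter]
    constructor
    · rintro ⟨p, ⟨hp, h1⟩, h2⟩
      have : p = (0, x) := Prod.ext h1 h2
      rwa [this] at hp
    · intro h
      exact ⟨(0, x), ⟨h, rfl⟩, rfl⟩
  by_cases hAne : A.Nonempty
  · refine ⟨A.min' hAne, ?_, ?_, ?_⟩
    · have := hb _ ((hmemA _).1 (A.min'_mem hAne))
      omega
    · have := hb _ ((hmemA _).1 (A.min'_mem hAne))
      omega
    · intro q hq hcon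
      set k := A.min' hAne with hk
      have hkT : (k, n+2) ∈ T := (hmemA _).1 (A.min'_mem hAne)
      have hnc := hT.2.1 q hq _ hkT
      rw [crossing_right] at hnc
      have hbq := hb q hq
      -- q.2 must be n+2, so q.1 ∈ A, contradicting minimality
      have hq2 : q.2 = n + 2 := by omega
      have : q.1 ∈ A := (hmemA _).2 (by rw [← hq2]; exact hq)
      have := A.min'_le _ this
      omega
  · by_cases hBne : B.Nonempty
    · refine ⟨B.max' hBne, ?_, ?_, ?_⟩
      · have := hb _ ((hmemB _).1 (B.max'_mem hBne))
        omega
      · have hmB := hb _ ((hmemB _).1 (B.max'_mem hBne))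
        -- max B ≤ n+1 since (0, n+2) not a diagonal
        omega
      · intro q hq hcon
        set k := B.max' hBne with hk
        have hkT : (0, k) ∈ T := (hmemB _).1 (B.max'_mem hBne)
        have hnc := hT.2.1 _ hkT q hq
        rw [crossing_left] at hnc
        have hbq := hb q hq
        have hq1 : q.1 = 0 := by omega
        have : q.2 ∈ B := (hmemB _).2 (by rw [← hq1]; exact hq)
        have := B.le_max' _ this
        omega
    · refine ⟨1, le_refl _, by omega, ?_⟩
      intro q hq hcon
      have hq1 : q.1 = 0 := by omega
      have : q.2 ∈ B := (hmemB _).2 (by rw [← hq1]; exact hq)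
      exact hBne ⟨_, this⟩

lemma decompose {n : ℕ} {T : Finset (ℕ × ℕ)} (hT : IsTriangulation (n+3) T) :
    ∃ i, i ≤ n ∧ ∃ T1 T2, IsTriangulation (i+2) T1 ∧ IsTriangulation (n-i+2) T2 ∧
      combine n i (T1, T2) = T := by
  classical
  obtain ⟨k, hk1, hk2, hfree⟩ := exists_free hT
  obtain ⟨i, rfl⟩ : ∃ i, k = i + 1 := ⟨k - 1, by omega⟩
  have hi : i ≤ n := by omega
  set k := i + 1 with hkdef
  have hb : ∀ p ∈ T, p.1 + 2 ≤ p.2 ∧ p.2 ≤ n+2 ∧ ¬(p.1 = 0 ∧ p.2 = n+2) := by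
    intro p hp
    have := hT.1 p hp
    simp only [IsDiagonal] at this
    omega
  have hsplit : ∀ p ∈ T, p.2 ≤ k ∨ k ≤ p.1 := by
    intro p hp
    have := hfree p hp
    omega
  set T1 : Finset (ℕ × ℕ) := T.filter (fun p => p.2 ≤ k ∧ p ≠ (0, k)) with hT1
  set F : Finset (ℕ × ℕ) := T.filter (fun p => k ≤ p.1 ∧ p ≠ (k, n+2)) with hF
  set T2 : Finset (ℕ × ℕ) := F.image (fun p => (p.1 - k, p.2 - k)) with hT2
  have hmemT1 : ∀ p, p ∈ T1 ↔ p ∈ T ∧ p.2 ≤ k ∧ p ≠ (0, k) := by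
    intro p; simp [hT1, Finset.mem_filter, and_assoc]
  have hmemF : ∀ p, p ∈ F ↔ p ∈ T ∧ k ≤ p.1 ∧ p ≠ (k, n+2) := by
    intro p; simp [hF, Finset.mem_filter, and_assoc]
  -- diagonal bounds for T1 members
  have hd1 : ∀ p ∈ T1, IsDiagonal (i+2) p.1 p.2 := by
    intro p hp
    obtain ⟨hpT, hp2, hpne⟩ := (hmemT1 p).1 hp
    have := hb p hpT
    refine ⟨by omega, by show p.2 ≤ i+2-1; omega, ?_⟩
    rintro ⟨h1, h2⟩
    exact hpne (Prod.ext h1 (by omega))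
  have hd2 : ∀ q ∈ T2, IsDiagonal (n-i+2) q.1 q.2 := by
    intro q hq
    obtain ⟨p, hpF, hpq⟩ := Finset.mem_image.1 hq
    obtain ⟨hpT, hp1, hpne⟩ := (hmemF p).1 hpF
    have hbp := hb p hpT
    have e1 : q.1 = p.1 - k := by rw [← hpq]
    have e2 : q.2 = p.2 - k := by rw [← hpq]
    refine ⟨by omega, by show q.2 ≤ n-i+2-1; omega, ?_⟩
    rintro ⟨h1, h2⟩
    have : p = (k, n+2) := Prod.ext (by omega) (by omega)
    exact hpne this
  -- noncrossing
  have hc1 : ∀ p ∈ T1, ∀ q ∈ T1, ¬ Crossing p q := by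
    intro p hp q hq
    exact hT.2.1 p ((hmemT1 p).1 hp).1 q ((hmemT1 q).1 hq).1
  have hc2 : ∀ p ∈ T2, ∀ q ∈ T2, ¬ Crossing p q := by
    intro p hp q hq
    obtain ⟨a, haF, hap⟩ := Finset.mem_image.1 hp
    obtain ⟨c, hcF, hcq⟩ := Finset.mem_image.1 hq
    obtain ⟨haT, ha1, _⟩ := (hmemF a).1 haF
    obtain ⟨hcT, hc1', _⟩ := (hmemF c).1 hcF
    have hba := hb a haT
    have hbc := hb c hcT
    have e1 : p.1 = a.1 - k := by rw [← hap]
    have e2 : p.2 = a.2 - k := by rw [← hap]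
    have e3 : q.1 = c.1 - k := by rw [← hcq]
    have e4 : q.2 = c.2 - k := by rw [← hcq]
    have hnc := hT.2.1 a haT c hcT
    simp only [Crossing] at hnc ⊢
    omega
  -- the combine equality
  have hco : combine n i (T1, T2) = T := by
    ext p
    rw [mem_combine]
    constructor
    · rintro (h | ⟨q, hq, hqp⟩ | ⟨h, rfl⟩ | ⟨h, rfl⟩)
      · exact ((hmemT1 p).1 h).1
      · obtain ⟨a, haF, haq⟩ := Finset.mem_image.1 hq
        obtain ⟨haT, ha1, _⟩ := (hmemF a).1 haF
        have hba := hb a haT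
        have : shiftp (i+1) q = a := by
          rw [← haq]
          refine Prod.ext ?_ ?_ <;> simp [shiftp] <;> omega
        rw [← hqp, this]
        exact haT
      · exact free_mem_left hT (by omega) (by omega) hfree
      · exact free_mem_right hT (by omega) (by omega) hfree
    · intro hp
      have hbp := hb p hp
      rcases hsplit p hp with h | h
      · by_cases hpe : p = (0, k)
        · subst hpe
          refine Or.inr (Or.inr (Or.inl ⟨?_, rfl⟩))
          have e1 : (((0:ℕ), k)).1 = 0 := rfl
          have e2 : (((0:ℕ), k)).2 = k := rfl
          omega
        · exact Or.inl ((hmemT1 p).2 ⟨hp, h, hpe⟩)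
      · by_cases hpe : p = (k, n+2)
        · subst hpe
          refine Or.inr (Or.inr (Or.inr ⟨?_, rfl⟩))
          have e1 : ((k, n+2)).1 = k := rfl
          have e2 : ((k, n+2)).2 = n+2 := rfl
          omega
        · refine Or.inr (Or.inl ⟨(p.1 - k, p.2 - k), ?_, ?_⟩)
          · exact Finset.mem_image_of_mem _ ((hmemF p).2 ⟨hp, h, hpe⟩)
          · refine Prod.ext ?_ ?_ <;> simp [shiftp] <;> omega
  -- cardinalities
  have hle1 : T1.card ≤ i + 2 - 3 := card_le_of_diag_noncross hd1 hc1
  have hle2 : T2.card ≤ n - i + 2 - 3 := card_le_of_diag_noncross hd2 hc2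
  have hinjF : Set.InjOn (fun p : ℕ × ℕ => (p.1 - k, p.2 - k)) F := by
    intro a ha b hb' he
    obtain ⟨haT, ha1, _⟩ := (hmemF a).1 ha
    obtain ⟨hbT, hb1, _⟩ := (hmemF b).1 hb'
    have hba := hb a haT
    have hbb := hb b hbT
    have e1 : a.1 - k = b.1 - k := congrArg Prod.fst he
    have e2 : a.2 - k = b.2 - k := congrArg Prod.snd he
    exact Prod.ext (by omega) (by omega)
  have hcT2 : T2.card = F.card := Finset.card_image_of_injOn hinjF
  have hcover : T ⊆ T1 ∪ F ∪ extra n k := by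
    intro p hp
    have hbp := hb p hp
    rcases hsplit p hp with h | h
    · by_cases hpe : p = (0, k)
      · apply Finset.mem_union_right
        simp only [extra]
        apply Finset.mem_union_left
        rw [mem_ite_singleton]
        have e1 : p.1 = 0 := by rw [hpe]
        have e2 : p.2 = k := by rw [hpe]
        exact ⟨by omega, hpe⟩
      · exact Finset.mem_union_left _ (Finset.mem_union_left _ ((hmemT1 p).2 ⟨hp, h, hpe⟩))
    · by_cases hpe : p = (k, n+2)
      · apply Finset.mem_union_right
        simp only [extra]
        apply Finset.mem_union_right
        rw [mem_ite_singleton]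
        have e1 : p.1 = k := by rw [hpe]
        have e2 : p.2 = n+2 := by rw [hpe]
        exact ⟨by omega, hpe⟩
      · exact Finset.mem_union_left _ (Finset.mem_union_right _ ((hmemF p).2 ⟨hp, h, hpe⟩))
  have hextra : (extra n k).card ≤ (if 2 ≤ k then 1 else 0) + (if k ≤ n then 1 else 0) := by
    refine le_trans (Finset.card_union_le _ _) ?_
    gcongr <;> split_ifs <;> simp
  have hTcard : T.card = n := by have := hT.2.2; omega
  have hub : T.card ≤ T1.card + F.card + (extra n k).card :=
    le_trans (Finset.card_le_card hcover)
      (le_trans (Finset.card_union_le _ _) (by gcongr; exact Finset.card_union_le _ _))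
  have hcard1 : T1.card = i + 2 - 3 := by
    rw [hcT2] at hle2
    split_ifs at hextra <;> omega
  have hcard2 : T2.card = n - i + 2 - 3 := by
    rw [hcT2] at hle2 ⊢
    split_ifs at hextra <;> omega
  exact ⟨i, hi, T1, T2, ⟨hd1, hc1, hcard1⟩, ⟨hd2, hc2, hcard2⟩, hco⟩

lemma bounds1 {i : ℕ} {T1 : Finset (ℕ × ℕ)} (h : IsTriangulation (i+2) T1) :
    ∀ p ∈ T1, p.1 + 2 ≤ p.2 ∧ p.2 ≤ i+1 ∧ ¬(p.1 = 0 ∧ p.2 = i+1) := by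
  intro p hp
  have := h.1 p hp
  simp only [IsDiagonal] at this
  omega

lemma bounds2 {n i : ℕ} {T2 : Finset (ℕ × ℕ)} (h : IsTriangulation (n-i+2) T2) :
    ∀ p ∈ T2, p.1 + 2 ≤ p.2 ∧ p.2 ≤ n-i+1 ∧ ¬(p.1 = 0 ∧ p.2 = n-i+1) := by
  intro p hp
  have := h.1 p hp
  simp only [IsDiagonal] at this
  omega

lemma combine_recover1 {n i : ℕ} (hi : i ≤ n) {T1 T2 : Finset (ℕ × ℕ)}
    (hb1 : ∀ p ∈ T1, p.1 + 2 ≤ p.2 ∧ p.2 ≤ i+1 ∧ ¬(p.1 = 0 ∧ p.2 = i+1))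
    (hb2 : ∀ p ∈ T2, p.1 + 2 ≤ p.2 ∧ p.2 ≤ n-i+1 ∧ ¬(p.1 = 0 ∧ p.2 = n-i+1)) :
    (combine n i (T1, T2)).filter (fun p => p.2 ≤ i+1 ∧ p ≠ (0, i+1)) = T1 := by
  classical
  ext p
  simp only [Finset.mem_filter]
  constructor
  · rintro ⟨hc, h2, hne⟩
    rcases mem_combine.1 hc with h | ⟨q, hq, hqp⟩ | ⟨hcd, h'⟩ | ⟨hcd, h'⟩
    · exact h
    · have := hb2 q hq
      have e2 : p.2 = q.2 + (i+1) := by rw [← hqp]; rfl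
      exact absurd h2 (by omega)
    · exact absurd h' hne
    · have e2 : p.2 = n+2 := by rw [h']
      exact absurd h2 (by omega)
  · intro hp
    have := hb1 p hp
    refine ⟨mem_combine.2 (Or.inl hp), by omega, ?_⟩
    intro h
    have e1 : p.1 = 0 := by rw [h]
    have e2 : p.2 = i+1 := by rw [h]
    omega

lemma combine_recover2 {n i : ℕ} (hi : i ≤ n) {T1 T2 : Finset (ℕ × ℕ)}
    (hb1 : ∀ p ∈ T1, p.1 + 2 ≤ p.2 ∧ p.2 ≤ i+1 ∧ ¬(p.1 = 0 ∧ p.2 = i+1))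
    (hb2 : ∀ p ∈ T2, p.1 + 2 ≤ p.2 ∧ p.2 ≤ n-i+1 ∧ ¬(p.1 = 0 ∧ p.2 = n-i+1)) :
    ((combine n i (T1, T2)).filter (fun p => i+1 ≤ p.1 ∧ p ≠ (i+1, n+2))).image
      (fun p => (p.1 - (i+1), p.2 - (i+1))) = T2 := by
  classical
  ext q
  simp only [Finset.mem_image, Finset.mem_filter]
  constructor
  · rintro ⟨p, ⟨hc, h1, hne⟩, hpq⟩
    rcases mem_combine.1 hc with h | ⟨r, hr, hrp⟩ | ⟨hcd, h'⟩ | ⟨hcd, h'⟩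
    · have := hb1 p h
      exact absurd h1 (by omega)
    · have e1 : p.1 = r.1 + (i+1) := by rw [← hrp]; rfl
      have e2 : p.2 = r.2 + (i+1) := by rw [← hrp]; rfl
      have f1 : q.1 = p.1 - (i+1) := by rw [← hpq]
      have f2 : q.2 = p.2 - (i+1) := by rw [← hpq]
      have : q = r := Prod.ext (by omega) (by omega)
      rwa [this]
    · have e1 : p.1 = 0 := by rw [h']
      exact absurd h1 (by omega)
    · exact absurd h' hne
  · intro hq
    have hbq := hb2 q hq
    refine ⟨shiftp (i+1) q, ⟨mem_combine.2 (Or.inr (Or.inl ⟨q, hq, rfl⟩)), ?_, ?_⟩, ?_⟩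
    · show i+1 ≤ q.1 + (i+1); omega
    · intro h
      have e1 : q.1 + (i+1) = i+1 := congrArg Prod.fst h
      have e2 : q.2 + (i+1) = n+2 := congrArg Prod.snd h
      omega
    · exact Prod.ext (by show q.1 + (i+1) - (i+1) = q.1; omega)
        (by show q.2 + (i+1) - (i+1) = q.2; omega)

lemma combine_marker {n i j : ℕ} (hij : i < j) {T1 T2 : Finset (ℕ × ℕ)}
    (hb1 : ∀ p ∈ T1, p.1 + 2 ≤ p.2 ∧ p.2 ≤ i+1 ∧ ¬(p.1 = 0 ∧ p.2 = i+1)) :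
    (0, j+1) ∉ combine n i (T1, T2) := by
  intro hc
  rcases mem_combine.1 hc with h | ⟨q, hq, hqp⟩ | ⟨hcd, h'⟩ | ⟨hcd, h'⟩
  · have := hb1 _ h
    have e2 : ((0:ℕ), j+1).2 = j+1 := rfl
    omega
  · have e1 : q.1 + (i+1) = 0 := congrArg Prod.fst hqp
    omega
  · have := congrArg Prod.snd h'
    simp only at this
    omega
  · have := congrArg Prod.fst h'
    simp only at this
    omega

open Classical in
noncomputable def Tfin (m : ℕ) : Finset (Finset (ℕ × ℕ)) :=
  ((Finset.range m ×ˢ Finset.range m).powerset).filter (fun T => IsTriangulation m T)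

lemma mem_Tfin {m : ℕ} {T : Finset (ℕ × ℕ)} : T ∈ Tfin m ↔ IsTriangulation m T := by
  classical
  simp only [Tfin, Finset.mem_filter, Finset.mem_powerset, and_iff_right_iff_imp]
  intro hT p hp
  have := hT.1 p hp
  simp only [IsDiagonal] at this
  simp only [Finset.mem_product, Finset.mem_range]
  omega

lemma Tfin_two : Tfin 2 = {∅} := by
  ext T
  rw [mem_Tfin, Finset.mem_singleton]
  constructor
  · intro h
    exact Finset.card_eq_zero.1 h.2.2
  · rintro rfl
    exact ⟨by simp, by simp, by simp⟩

lemma Tfin_succ (n : ℕ) :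
    Tfin (n+3) = (Finset.range (n+1)).biUnion
      (fun i => ((Tfin (i+2)) ×ˢ (Tfin (n-i+2))).image (combine n i)) := by
  ext T
  simp only [Finset.mem_biUnion, Finset.mem_image, Finset.mem_range, Finset.mem_product]
  constructor
  · intro hT
    obtain ⟨i, hi, T1, T2, h1, h2, hco⟩ := decompose (mem_Tfin.1 hT)
    exact ⟨i, by omega, (T1, T2), ⟨mem_Tfin.2 h1, mem_Tfin.2 h2⟩, hco⟩
  · rintro ⟨i, hi, ⟨T1, T2⟩, ⟨h1, h2⟩, rfl⟩
    exact mem_Tfin.2 (combine_isTri (by omega) (mem_Tfin.1 h1) (mem_Tfin.1 h2))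

lemma Tfin_card : ∀ n, (Tfin (n+2)).card = catalan n := by
  intro n
  induction n using Nat.strong_induction_on with
  | _ n ih =>
    match n with
    | 0 => rw [Tfin_two]; simp
    | (m+1) =>
      have h3 : m + 1 + 2 = m + 3 := rfl
      rw [h3, Tfin_succ m]
      rw [Finset.card_biUnion]
      · have hsum : ∀ i ∈ Finset.range (m+1),
            (((Tfin (i+2)) ×ˢ (Tfin (m-i+2))).image (combine m i)).card
              = catalan i * catalan (m - i) := by
          intro i hi
          rw [Finset.mem_range] at hi
          rw [Finset.card_image_of_injOn, Finset.card_product]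
          · rw [ih i (by omega), ih (m-i) (by omega)]
          · rintro ⟨a1, a2⟩ ha ⟨b1, b2⟩ hb hab
            simp only [Finset.mem_coe, Finset.mem_product] at ha hb
            have hba1 := bounds1 (mem_Tfin.1 ha.1)
            have hba2 := bounds2 (mem_Tfin.1 ha.2)
            have hbb1 := bounds1 (mem_Tfin.1 hb.1)
            have hbb2 := bounds2 (mem_Tfin.1 hb.2)
            have e1 : a1 = b1 := by
              rw [← combine_recover1 (by omega) hba1 hba2,
                ← combine_recover1 (by omega) hbb1 hbb2, hab]
            have e2 : a2 = b2 := by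
              rw [← combine_recover2 (by omega) hba1 hba2,
                ← combine_recover2 (by omega) hbb1 hbb2, hab]
            rw [e1, e2]
        rw [Finset.sum_congr rfl hsum, catalan_succ m]
        exact (Fin.sum_univ_eq_sum_range (fun x => catalan x * catalan (m - x)) (m+1)).symm
      · intro i hi j hj hij
        rw [Finset.mem_coe, Finset.mem_range] at hi hj
        show Disjoint _ _
        wlog hlt : i < j generalizing i j
        · exact (this hj hi hij.symm (by omega)).symm
        rw [Finset.disjoint_left]
        rintro T hTi hTj
        simp only [Finset.mem_image, Finset.mem_product] at hTi hTj
        obtain ⟨⟨a1, a2⟩, ⟨ha1, ha2⟩, rfl⟩ := hTi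
        obtain ⟨⟨b1, b2⟩, ⟨hb1, hb2⟩, hco⟩ := hTj
        have hmark : (0, j+1) ∈ combine m j (b1, b2) :=
          mem_combine.2 (Or.inr (Or.inr (Or.inl ⟨by omega, rfl⟩)))
        rw [hco] at hmark
        exact combine_marker hlt (bounds1 (mem_Tfin.1 ha1)) hmark

/-- The number of triangulations of a convex `(n+2)`-gon equals the Catalan
number `C_n = (1/(n+1)) * binomial(2n, n)`. -/
theorem numTriangulations_eq_catalan (n : ℕ) :
    {T : Finset (ℕ × ℕ) | IsTriangulation (n + 2) T}.ncard =
      Nat.choose (2 * n) n / (n + 1) := by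
  have h1 : {T : Finset (ℕ × ℕ) | IsTriangulation (n + 2) T} = ↑(Tfin (n+2)) := by
    ext T
    simp only [Set.mem_setOf_eq, Finset.coe_filter, Finset.mem_coe, mem_Tfin]
  rw [h1, Set.ncard_coe_finset, Tfin_card, catalan_eq_centralBinom_div]
  rfl
end

section
/- The number of Young diagrams (partitions) λ = (λ_1 ≥ λ_2 ≥ ...) satisfying λ_k ≤ n - k for all k ≥ 1 equals the Catalan number C_n. -/
/-- The partition `f` (with `f k` the length of row `k`, `k ≥ 1`) lies in `Y_n`:
`f k ≤ n - k` for all `k ≥ 1`. -/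
def InY (n : ℕ) (f : ℕ → ℕ) : Prop :=
  f 0 = 0 ∧ (∀ k, 1 ≤ k → f (k + 1) ≤ f k) ∧ (∀ k, 1 ≤ k → f k ≤ n - k)

namespace YoungAux

lemma anti {n : ℕ} {f : ℕ → ℕ} (hf : InY n f) {a b : ℕ} (ha : 1 ≤ a) (hab : a ≤ b) :
    f b ≤ f a := by
  induction b with
  | zero => exact absurd (ha.trans hab) (by omega)
  | succ b ih =>
    rcases Nat.eq_or_lt_of_le hab with h | h
    · rw [h]
    · have hb : a ≤ b := by omega
      exact (hf.2.1 b (ha.trans hb)).trans (ih hb)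

instance instFin (m : ℕ) : Finite {f : ℕ → ℕ // InY m f} := by
  apply Finite.of_injective (fun f => (fun k : Fin (m + 1) =>
    (⟨f.1 k, by
      rcases k with ⟨k, hk⟩
      obtain ⟨h0, hmono, hb⟩ := f.2
      dsimp only
      match k with
      | 0 => omega
      | k + 1 => have := hb (k + 1) (by omega); omega⟩ : Fin (m + 1))))
  intro f g hfg
  ext k
  by_cases hk : k ≤ m
  · have := congrFun hfg ⟨k, by omega⟩
    simpa [Fin.ext_iff] using this
  · have h1 : f.1 k = 0 := by have := f.2.2.2 k (by omega); omega
    have h2 : g.1 k = 0 := by have := g.2.2.2 k (by omega); omega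
    rw [h1, h2]

lemma nat_card_sigma {ι : Type*} [Fintype ι] (β : ι → Type*) [∀ i, Finite (β i)] :
    Nat.card (Σ i, β i) = ∑ i, Nat.card (β i) := by
  letI : ∀ i, Fintype (β i) := fun i => Fintype.ofFinite _
  simp [Nat.card_eq_fintype_card]

/-- The inverse direction of the first-return decomposition: glue a partition in
`Y_{n-s}` (below row `s`) and one in `Y_s` (pushed right) into one in `Y_{n+1}`. -/
def F (n : ℕ) (x : Σ s : Fin (n + 1), {f : ℕ → ℕ // InY (n - s) f} × {f : ℕ → ℕ // InY s f}) :
    {f : ℕ → ℕ // InY (n + 1) f} := by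
  obtain ⟨⟨s, hs⟩, ⟨g, hg⟩, ⟨h, hh⟩⟩ := x
  have hg : InY (n - s) g := hg
  have hh : InY s h := hh
  refine ⟨fun k => if k = 0 then 0 else if k ≤ s then h k + (n + 1 - s) else g (k - s), ?_, ?_, ?_⟩
  · simp
  · intro k hk
    have hs' : s ≤ n := by omega
    by_cases h1 : k + 1 ≤ s
    · have := hh.2.1 k hk
      simp only [if_neg (by omega : ¬ k + 1 = 0), if_neg (by omega : ¬ k = 0),
        if_pos h1, if_pos (by omega : k ≤ s)]
      omega
    · by_cases h2 : k ≤ s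
      · -- k = s, k+1 = s+1 > s
        have hg1 : g 1 ≤ (n - s) - 1 := hg.2.2 1 le_rfl
        simp only [if_neg (by omega : ¬ k + 1 = 0), if_neg (by omega : ¬ k = 0),
          if_neg h1, if_pos h2]
        have : k + 1 - s = 1 := by omega
        rw [this]
        omega
      · simp only [if_neg (by omega : ¬ k + 1 = 0), if_neg (by omega : ¬ k = 0),
          if_neg h1, if_neg h2]
        have : k + 1 - s = (k - s) + 1 := by omega
        rw [this]
        exact hg.2.1 (k - s) (by omega)
  · intro k hk
    have hs' : s ≤ n := by omega
    by_cases h2 : k ≤ s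
    · have := hh.2.2 k hk
      simp only [if_neg (by omega : ¬ k = 0), if_pos h2]
      omega
    · have := hg.2.2 (k - s) (by omega)
      simp only [if_neg (by omega : ¬ k = 0), if_neg h2]
      omega

lemma F_injective (n : ℕ) : Function.Injective (F n) := by
  rintro ⟨⟨s, hs⟩, ⟨g, hg⟩, ⟨h, hh⟩⟩ ⟨⟨t, ht⟩, ⟨g', hg'⟩, ⟨h', hh'⟩⟩ hxy
  have hg : InY (n - s) g := hg
  have hh : InY s h := hh
  have hg' : InY (n - t) g' := hg'
  have hh' : InY t h' := hh'
  have hval := congrArg Subtype.val hxy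
  simp only [F] at hval
  -- f := common value
  have key : ∀ (s : ℕ) (g h : ℕ → ℕ), s ≤ n → InY (n - s) g → InY s h →
      (1 ≤ s → (if (s:ℕ) = 0 then 0 else if s ≤ s then h s + (n + 1 - s) else g (s - s)) + s = n + 1) := by
    intro s g h hsn hg hh h1
    have := hh.2.2 s h1
    simp only [if_neg (by omega : ¬ s = 0), if_pos le_rfl]
    omega
  have notouch : ∀ (s : ℕ) (g h : ℕ → ℕ), s ≤ n → InY (n - s) g →
      ∀ k, s < k → k ≤ n →
      (if k = 0 then 0 else if k ≤ s then h k + (n + 1 - s) else g (k - s)) + k ≠ n + 1 := by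
    intro s g h hsn hg k hk1 hk2
    have := hg.2.2 (k - s) (by omega)
    simp only [if_neg (by omega : ¬ k = 0), if_neg (by omega : ¬ k ≤ s)]
    omega
  have hst : s = t := by
    by_contra hne
    rcases Nat.lt_or_ge s t with hlt | hge
    · have h1 := key t g' h' (by omega) hg' hh' (by omega)
      have h2 := notouch s g h (by omega) hg t hlt (by omega)
      rw [congrFun hval t] at h2
      exact h2 h1
    · have hlt : t < s := by omega
      have h1 := key s g h (by omega) hg hh (by omega)
      have h2 := notouch t g' h' (by omega) hg' s hlt (by omega)
      rw [← congrFun hval s] at h2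
      exact h2 h1
  subst hst
  have hgg : g = g' := by
    funext k
    match k with
    | 0 => rw [hg.1, hg'.1]
    | k + 1 =>
      have := congrFun hval (s + (k + 1))
      simp only [if_neg (by omega : ¬ s + (k + 1) = 0),
        if_neg (by omega : ¬ s + (k + 1) ≤ s)] at this
      simpa [Nat.add_sub_cancel_left] using this
  have hhh : h = h' := by
    funext k
    match k with
    | 0 => rw [hh.1, hh'.1]
    | k + 1 =>
      by_cases hks : k + 1 ≤ s
      · have := congrFun hval (k + 1)
        simp only [if_neg (by omega : ¬ k + 1 = 0), if_pos hks] at this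
        omega
      · have h1 := hh.2.2 (k + 1) (by omega)
        have h2 := hh'.2.2 (k + 1) (by omega)
        omega
  subst hgg
  subst hhh
  rfl

lemma F_surjective (n : ℕ) : Function.Surjective (F n) := by
  rintro ⟨f, hf⟩
  classical
  set s := Nat.findGreatest (fun k => f k + k = n + 1) n with hs_def
  obtain ⟨hsle, hPs, hnotouch⟩ :=
    (Nat.findGreatest_eq_iff (m := s) (P := fun k => f k + k = n + 1) (k := n)).1 rfl
  -- strict bound beyond s
  have strict : ∀ k, s < k → f k ≤ n - k := by
    intro k hk
    by_cases hkn : k ≤ n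
    · have hb : f k ≤ n + 1 - k := hf.2.2 k (by omega)
      have := hnotouch hk hkn
      omega
    · have hb : f k ≤ n + 1 - k := hf.2.2 k (by omega)
      omega
  have touch : 1 ≤ s → f s + s = n + 1 := fun h1 => hPs (by omega)
  have hge : ∀ k, 1 ≤ k → k ≤ s → n + 1 - s ≤ f k := by
    intro k h1 h2
    have := anti hf h1 h2
    have ht := touch (h1.trans h2)
    omega
  refine ⟨⟨⟨s, by omega⟩, ⟨fun k => if k = 0 then 0 else f (s + k), ?_, ?_, ?_⟩,
      ⟨fun k => if k ≤ s then f k - (n + 1 - s) else 0, ?_, ?_, ?_⟩⟩, ?_⟩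
  · simp
  · intro k hk
    simp only [if_neg (by omega : ¬ k + 1 = 0), if_neg (by omega : ¬ k = 0)]
    have : s + (k + 1) = (s + k) + 1 := by omega
    rw [this]
    exact hf.2.1 (s + k) (by omega)
  · intro k hk
    simp only [if_neg (by omega : ¬ k = 0)]
    have := strict (s + k) (by omega)
    omega
  · simp [hf.1]
  · intro k hk
    by_cases h1 : k + 1 ≤ s
    · have := hf.2.1 k hk
      simp only [if_pos h1, if_pos (by omega : k ≤ s)]
      omega
    · simp only [if_neg h1]
      omega
  · intro k hk
    by_cases h1 : k ≤ s
    · have := hf.2.2 k hk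
      simp only [if_pos h1]
      omega
    · simp only [if_neg h1]
      omega
  · apply Subtype.ext
    funext k
    simp only [F]
    match k with
    | 0 => simp [hf.1]
    | k + 1 =>
      by_cases h1 : k + 1 ≤ s
      · have := hge (k + 1) (by omega) h1
        simp only [if_neg (by omega : ¬ k + 1 = 0), if_pos h1]
        omega
      · simp only [if_neg (by omega : ¬ k + 1 = 0), if_neg h1,
          if_neg (by omega : ¬ k + 1 - s = 0)]
        have : s + (k + 1 - s) = k + 1 := by omega
        rw [this]

lemma card_eq_catalan : ∀ n : ℕ, Nat.card {f : ℕ → ℕ // InY n f} = catalan n := by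
  intro n
  induction n using Nat.strong_induction_on with
  | _ n ih =>
    match n with
    | 0 =>
      rw [catalan_zero]
      rw [Nat.card_eq_one_iff_unique]
      constructor
      · constructor
        intro a b
        apply Subtype.ext
        funext k
        match k with
        | 0 => rw [a.2.1, b.2.1]
        | k + 1 =>
          have h1 := a.2.2.2 (k + 1) (by omega)
          have h2 := b.2.2.2 (k + 1) (by omega)
          omega
      · exact ⟨⟨fun _ => 0, rfl, fun _ _ => le_rfl, fun _ _ => Nat.zero_le _⟩⟩
    | n + 1 =>
      have hbij : Function.Bijective (F n) := ⟨F_injective n, F_surjective n⟩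
      rw [← Nat.card_eq_of_bijective _ hbij, nat_card_sigma]
      have : ∀ s : Fin (n + 1),
          Nat.card ({f : ℕ → ℕ // InY (n - s) f} × {f : ℕ → ℕ // InY s f})
            = catalan (n - s) * catalan s := by
        intro s
        rw [Nat.card_prod, ih (n - s) (by omega), ih s (by omega)]
      rw [Finset.sum_congr rfl (fun s _ => this s), catalan_succ]
      exact (Finset.sum_congr rfl (fun s _ => mul_comm _ _)).symm

end YoungAux

/-- The number of Young diagrams `λ` with `λ_k ≤ n - k` for all `k ≥ 1` equals
the Catalan number `C_n = (1/(n+1)) * binomial(2n, n)`. -/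
theorem numYoung_eq_catalan (n : ℕ) :
    {f : ℕ → ℕ | InY n f}.ncard = Nat.choose (2 * n) n / (n + 1) := by
  have h := YoungAux.card_eq_catalan n
  rw [catalan_eq_centralBinom_div, Nat.centralBinom] at h
  rw [← Nat.card_coe_set_eq]
  exact h
end

section
/- If two distinct triangulations A and B of a convex n-gon are given, then the multisets of tails of their diagonals, listed in decreasing order, are different. That is, the map sending a triangulation to its decreasingly-ordered sequence of diagonal tails is injective. -/
/-- The list of tails (smaller endpoints) of the diagonals of `T`,
sorted in decreasing order. -/
def tails (T : Finset (ℕ × ℕ)) : List ℕ :=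
  (T.val.map Prod.fst).sort (· ≥ ·)



/-- Transfer a non-crossing family along a relabeling monotone on its endpoints. -/
lemma transfer (m : ℕ) (S : Finset (ℕ × ℕ)) (f : ℕ → ℕ) (V : ℕ → Prop)
    (hV : ∀ p ∈ S, V p.1 ∧ V p.2)
    (hf : ∀ u v, V u → V v → (u < v ↔ f u < f v))
    (hnc : ∀ p ∈ S, ∀ q ∈ S, ¬ Crossing p q)
    (hd : ∀ p ∈ S, IsDiagonal m (f p.1) (f p.2))
    (hrec : ∀ S' : Finset (ℕ × ℕ), S'.card = S.card →
      (∀ p ∈ S', IsDiagonal m p.1 p.2) →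
      (∀ p ∈ S', ∀ q ∈ S', ¬ Crossing p q) → S'.card ≤ m - 3) :
    S.card ≤ m - 3 := by
  classical
  have hfe : ∀ u v, V u → V v → f u = f v → u = v := by
    intro u v hu hv e
    rcases Nat.lt_trichotomy u v with h' | h' | h'
    · have := (hf u v hu hv).1 h'; omega
    · exact h'
    · have := (hf v u hv hu).1 h'; omega
  have hinj : Set.InjOn (fun p : ℕ × ℕ => (f p.1, f p.2)) S := by
    intro p hp q hq e
    have h1 := hV p hp; have h2 := hV q hq
    have e1 : f p.1 = f q.1 := congrArg Prod.fst e
    have e2 : f p.2 = f q.2 := congrArg Prod.snd e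
    exact Prod.ext (hfe _ _ h1.1 h2.1 e1) (hfe _ _ h1.2 h2.2 e2)
  have hcard : (S.image (fun p : ℕ × ℕ => (f p.1, f p.2))).card = S.card :=
    Finset.card_image_of_injOn hinj
  rw [← hcard]
  refine hrec _ hcard ?_ ?_
  · intro p hp
    obtain ⟨q, hq, rfl⟩ := Finset.mem_image.1 hp
    exact hd q hq
  · intro p hp q hq hc
    obtain ⟨p', hp', rfl⟩ := Finset.mem_image.1 hp
    obtain ⟨q', hq', rfl⟩ := Finset.mem_image.1 hq
    refine hnc p' hp' q' hq' ?_
    have h1 := hV p' hp'; have h2 := hV q' hq'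
    unfold Crossing at hc ⊢
    dsimp only at hc ⊢
    rcases hc with ⟨c1, c2, c3⟩ | ⟨c1, c2, c3⟩
    · exact Or.inl ⟨(hf _ _ h1.1 h2.1).2 c1, (hf _ _ h2.1 h1.2).2 c2, (hf _ _ h1.2 h2.2).2 c3⟩
    · exact Or.inr ⟨(hf _ _ h2.1 h1.1).2 c1, (hf _ _ h1.1 h2.2).2 c2, (hf _ _ h2.2 h1.2).2 c3⟩

/-- A non-crossing set of diagonals of an `n`-gon has at most `n - 3` elements. -/
lemma nc_bound : ∀ (k n : ℕ) (S : Finset (ℕ × ℕ)), S.card = k →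
    (∀ p ∈ S, IsDiagonal n p.1 p.2) →
    (∀ p ∈ S, ∀ q ∈ S, ¬ Crossing p q) → S.card ≤ n - 3 := by
  intro k
  induction k using Nat.strong_induction_on with
  | _ k IH =>
  intro n S hSk hd hnc
  rcases Finset.eq_empty_or_nonempty S with rfl | hne
  · simp
  obtain ⟨p0, hp0, hmin⟩ := S.exists_min_image (fun p => p.2 - p.1) hne
  obtain ⟨a, b⟩ := p0
  obtain ⟨hab, hbn, hne0⟩ := hd (a, b) hp0
  dsimp only at hab hbn hne0
  have hn4 : 4 ≤ n := by omega
  have hiso : ∀ q ∈ S, q.1 ≠ a + 1 ∧ q.2 ≠ a + 1 := by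
    intro q hq
    obtain ⟨c, d⟩ := q
    obtain ⟨hcd, hdn, -⟩ := hd (c, d) hq
    have hm := hmin (c, d) hq
    dsimp only at hm hcd hdn ⊢
    constructor
    · intro h
      refine absurd ?_ (hnc (a, b) hp0 (c, d) hq)
      unfold Crossing; dsimp only; left; omega
    · intro h
      refine absurd ?_ (hnc (a, b) hp0 (c, d) hq)
      unfold Crossing; dsimp only; right; omega
  have hk1 : 1 ≤ k := by
    rw [← hSk]; exact Finset.card_pos.2 hne
  have herase : (S.erase (a, b)).card = k - 1 := by
    rw [Finset.card_erase_of_mem hp0, hSk]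
  have hb2 : (S.erase (a, b)).card ≤ (n - 1) - 3 := by
    refine transfer (n - 1) _ (fun v => if v ≤ a then v else v - 1) (fun v => v ≠ a + 1)
      ?_ ?_ ?_ ?_ ?_
    · intro p hp; exact hiso p (Finset.mem_of_mem_erase hp)
    · intro u v hu hv; split_ifs <;> omega
    · intro p hp q hq
      exact hnc _ (Finset.mem_of_mem_erase hp) _ (Finset.mem_of_mem_erase hq)
    · intro q hq
      have hqS := Finset.mem_of_mem_erase hq
      have hqne := Finset.ne_of_mem_erase hq
      obtain ⟨c, d⟩ := q
      obtain ⟨hcd, hdn, hne1⟩ := hd (c, d) hqS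
      obtain ⟨hc1, hd1⟩ := hiso (c, d) hqS
      have hm := hmin (c, d) hqS
      dsimp only at hm hc1 hd1 hcd hdn hne1
      have hqne' : ¬(c = a ∧ d = b) := by
        rintro ⟨rfl, rfl⟩; exact hqne rfl
      unfold IsDiagonal; dsimp only; split_ifs <;> refine ⟨by omega, by omega, by omega⟩
    · intro S' hc h1 h2
      exact IH (k - 1) (by omega) (n - 1) S' (by rw [hc, herase]) h1 h2
  omega
/-- Diagonals confined to the window `[u, v]` number at most `v - u - 1`
(including possibly `(u,v)` itself). -/
lemma window_bound (u v : ℕ) (S : Finset (ℕ × ℕ))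
    (hgap : ∀ p ∈ S, p.1 + 2 ≤ p.2)
    (hin : ∀ p ∈ S, u ≤ p.1 ∧ p.2 ≤ v)
    (hnc : ∀ p ∈ S, ∀ q ∈ S, ¬ Crossing p q) :
    S.card ≤ v - u - 1 := by
  classical
  rcases Finset.eq_empty_or_nonempty S with rfl | hne
  · simp
  obtain ⟨p0, hp0⟩ := hne
  have huv : u + 2 ≤ v := by
    have h1 := hgap p0 hp0; have h2 := hin p0 hp0; omega
  have hb2 : (S.erase (u, v)).card ≤ (v - u + 1) - 3 := by
    refine transfer (v - u + 1) _ (fun x => x - u) (fun x => u ≤ x) ?_ ?_ ?_ ?_ ?_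
    · intro p hp
      have h1 := hin p (Finset.mem_of_mem_erase hp)
      have h2 := hgap p (Finset.mem_of_mem_erase hp)
      exact ⟨h1.1, by omega⟩
    · intro x y hx hy; omega
    · intro p hp q hq
      exact hnc _ (Finset.mem_of_mem_erase hp) _ (Finset.mem_of_mem_erase hq)
    · intro p hp
      have hmem := Finset.mem_of_mem_erase hp
      have hne2 := Finset.ne_of_mem_erase hp
      obtain ⟨x, y⟩ := p
      have h1 := hin (x, y) hmem
      have h2 := hgap (x, y) hmem
      have h3 : ¬(x = u ∧ y = v) := by rintro ⟨rfl, rfl⟩; exact hne2 rfl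
      dsimp only at h1 h2
      unfold IsDiagonal; dsimp only
      refine ⟨by omega, by omega, by omega⟩
    · intro S' hc h1 h2; exact nc_bound S'.card (v - u + 1) S' rfl h1 h2
  by_cases hm : (u, v) ∈ S
  · have := Finset.card_erase_of_mem hm; omega
  · rw [Finset.erase_eq_of_notMem hm] at hb2; omega

/-- Diagonals avoiding the open region cut off by the diagonal `(a,b)` number
at most `n - b + a - 2`. -/
lemma outer_bound (n a b : ℕ) (S : Finset (ℕ × ℕ))
    (hab : a + 2 ≤ b) (hbn : b ≤ n - 1) (hn : 3 ≤ n)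
    (hd : ∀ p ∈ S, IsDiagonal n p.1 p.2)
    (hout : ∀ p ∈ S, (p.1 ≤ a ∨ b ≤ p.1) ∧ (p.2 ≤ a ∨ b ≤ p.2) ∧ ¬(p.1 = a ∧ p.2 = b))
    (hnc : ∀ p ∈ S, ∀ q ∈ S, ¬ Crossing p q) :
    S.card ≤ n - b + a - 2 := by
  have hb2 : S.card ≤ (n - b + a + 1) - 3 := by
    refine transfer (n - b + a + 1) _ (fun x => if x ≤ a then x else x - (b - a - 1))
      (fun x => x ≤ a ∨ b ≤ x) ?_ ?_ ?_ ?_ ?_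
    · intro p hp; exact ⟨(hout p hp).1, (hout p hp).2.1⟩
    · intro x y hx hy; split_ifs <;> omega
    · exact hnc
    · intro p hp
      obtain ⟨x, y⟩ := p
      obtain ⟨h1, h2, h3⟩ := hd (x, y) hp
      obtain ⟨h4, h5, h6⟩ := hout (x, y) hp
      dsimp only at h1 h2 h3 h4 h5 h6
      unfold IsDiagonal; dsimp only
      split_ifs <;> refine ⟨by omega, by omega, by omega⟩
    · intro S' hc h1 h2; exact nc_bound S'.card (n - b + a + 1) S' rfl h1 h2
  omega

/-- In a triangulation, a diagonal `(a,b)` has exactly `b - a - 1` diagonals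
(including itself) inside the window `[a,b]`. -/
lemma split_count (n a b : ℕ) (T : Finset (ℕ × ℕ))
    (hd : ∀ p ∈ T, IsDiagonal n p.1 p.2)
    (hnc : ∀ p ∈ T, ∀ q ∈ T, ¬ Crossing p q)
    (hcard : T.card = n - 3)
    (hab : (a, b) ∈ T) :
    (T.filter fun e => a ≤ e.1 ∧ e.2 ≤ b).card = b - a - 1 := by
  classical
  obtain ⟨h1, h2, h3⟩ := hd (a, b) hab
  dsimp only at h1 h2 h3
  have hI : (T.filter fun e => a ≤ e.1 ∧ e.2 ≤ b).card ≤ b - a - 1 := by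
    refine window_bound a b _ ?_ ?_ ?_
    · intro p hp; exact (hd p (Finset.mem_of_mem_filter _ hp)).1
    · intro p hp; exact (Finset.mem_filter.1 hp).2
    · intro p hp q hq
      exact hnc _ (Finset.mem_of_mem_filter _ hp) _ (Finset.mem_of_mem_filter _ hq)
  have hO : (T.filter fun e => ¬(a ≤ e.1 ∧ e.2 ≤ b)).card ≤ n - b + a - 2 := by
    refine outer_bound n a b _ h1 h2 (by omega) ?_ ?_ ?_
    · intro p hp; exact hd p (Finset.mem_of_mem_filter _ hp)
    · intro p hp
      have hpT := Finset.mem_of_mem_filter _ hp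
      have hnp := (Finset.mem_filter.1 hp).2
      obtain ⟨x, y⟩ := p
      obtain ⟨g1, g2, g3⟩ := hd (x, y) hpT
      have c1 := hnc (a, b) hab (x, y) hpT
      unfold Crossing at c1
      dsimp only at g1 g2 g3 c1 hnp ⊢
      refine ⟨by omega, by omega, by omega⟩
    · intro p hp q hq
      exact hnc _ (Finset.mem_of_mem_filter _ hp) _ (Finset.mem_of_mem_filter _ hq)
  have hsum := Finset.card_filter_add_card_filter_not
      (s := T) (p := fun e : ℕ × ℕ => a ≤ e.1 ∧ e.2 ≤ b)
  omega
/-- Key lemma: the head of any diagonal `(a,b)` of a triangulation is determined by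
tail counts: `b = a + 1 + #{tail = a, head ≤ b} + #{a < tail < b}`, and `b` is the
least such "fixed point". -/
lemma key_lemma (n a b : ℕ) (T : Finset (ℕ × ℕ))
    (hd : ∀ p ∈ T, IsDiagonal n p.1 p.2)
    (hnc : ∀ p ∈ T, ∀ q ∈ T, ¬ Crossing p q)
    (hcard : T.card = n - 3)
    (hab : (a, b) ∈ T) :
    b = a + 1 + (T.filter fun e => e.1 = a ∧ e.2 ≤ b).card
        + (T.filter fun e => a < e.1 ∧ e.1 < b).card
    ∧ ∀ x, x < b → x < a + 1 + (T.filter fun e => e.1 = a ∧ e.2 ≤ b).card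
        + (T.filter fun e => a < e.1 ∧ e.1 < x).card := by
  classical
  obtain ⟨h1, h2, h3⟩ := hd (a, b) hab
  dsimp only at h1 h2 h3
  have hhead : ∀ e ∈ T, a < e.1 → e.1 < b → e.2 ≤ b := by
    intro e he ha hb'
    have c1 := hnc (a, b) hab e he
    unfold Crossing at c1
    dsimp only at c1
    omega
  have hsplit := split_count n a b T hd hnc hcard hab
  have hunion : T.filter (fun e => a ≤ e.1 ∧ e.2 ≤ b)
      = T.filter (fun e => e.1 = a ∧ e.2 ≤ b) ∪ T.filter (fun e => a < e.1 ∧ e.1 < b) := by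
    ext e
    simp only [Finset.mem_filter, Finset.mem_union]
    constructor
    · rintro ⟨he, hc1, hc2⟩
      have hg := (hd e he).1
      rcases Nat.eq_or_lt_of_le hc1 with h | h
      · exact Or.inl ⟨he, h.symm, hc2⟩
      · exact Or.inr ⟨he, h, by omega⟩
    · rintro (⟨he, hc1, hc2⟩ | ⟨he, hc1, hc2⟩)
      · exact ⟨he, by omega, hc2⟩
      · exact ⟨he, by omega, hhead e he hc1 hc2⟩
  have hdisj : Disjoint (T.filter (fun e => e.1 = a ∧ e.2 ≤ b))
      (T.filter (fun e => a < e.1 ∧ e.1 < b)) := by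
    rw [Finset.disjoint_left]
    intro e he1 he2
    have g1 := (Finset.mem_filter.1 he1).2
    have g2 := (Finset.mem_filter.1 he2).2
    omega
  have hcards : (T.filter fun e => a ≤ e.1 ∧ e.2 ≤ b).card
      = (T.filter fun e => e.1 = a ∧ e.2 ≤ b).card
        + (T.filter fun e => a < e.1 ∧ e.1 < b).card := by
    rw [hunion, Finset.card_union_of_disjoint hdisj]
  have hj1 : (a, b) ∈ T.filter (fun e => e.1 = a ∧ e.2 ≤ b) :=
    Finset.mem_filter.2 ⟨hab, rfl, le_refl b⟩
  have hjpos : 1 ≤ (T.filter fun e => e.1 = a ∧ e.2 ≤ b).card :=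
    Finset.card_pos.2 ⟨_, hj1⟩
  refine ⟨by omega, ?_⟩
  intro x hx
  by_cases hxa : x ≤ a + 1
  · omega
  · have hwin : (T.filter fun e => x ≤ e.1 ∧ e.1 < b).card ≤ b - x - 1 := by
      refine window_bound x b _ ?_ ?_ ?_
      · intro p hp; exact (hd p (Finset.mem_of_mem_filter _ hp)).1
      · intro p hp
        have hp2 := (Finset.mem_filter.1 hp).2
        exact ⟨hp2.1, hhead p (Finset.mem_of_mem_filter _ hp) (by omega) hp2.2⟩
      · intro p hp q hq
        exact hnc _ (Finset.mem_of_mem_filter _ hp) _ (Finset.mem_of_mem_filter _ hq)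
    have hsub : (T.filter fun e => a < e.1 ∧ e.1 < b).card
        ≤ (T.filter fun e => a < e.1 ∧ e.1 < x).card
          + (T.filter fun e => x ≤ e.1 ∧ e.1 < b).card := by
      refine le_trans (Finset.card_le_card ?_) (Finset.card_union_le _ _)
      intro e he
      have he1 := Finset.mem_of_mem_filter _ he
      have he2 := (Finset.mem_filter.1 he).2
      simp only [Finset.mem_union, Finset.mem_filter]
      by_cases hc : e.1 < x
      · exact Or.inl ⟨he1, he2.1, hc⟩
      · exact Or.inr ⟨he1, by omega, he2.2⟩
    omega
/-- Equal tail multisets give equal counts for any predicate on tails. -/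
lemma count_eq (A B : Finset (ℕ × ℕ))
    (hM : A.val.map Prod.fst = B.val.map Prod.fst)
    (q : ℕ → Prop) [DecidablePred q] :
    (A.filter fun e => q e.1).card = (B.filter fun e => q e.1).card := by
  have key : ∀ T : Finset (ℕ × ℕ),
      (T.filter fun e => q e.1).card = Multiset.countP q (T.val.map Prod.fst) := by
    intro T
    rw [Multiset.countP_map]
    rfl
  rw [key, key, hM]

/-- Step decomposition of the head-bounded count. -/
lemma count_step (T : Finset (ℕ × ℕ)) (a x : ℕ) (hx : 1 ≤ x) :
    (T.filter fun e => e.1 = a ∧ e.2 ≤ x).card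
      = (T.filter fun e => e.1 = a ∧ e.2 ≤ x - 1).card
        + (if (a, x) ∈ T then 1 else 0) := by
  classical
  have hu : T.filter (fun e => e.1 = a ∧ e.2 ≤ x)
      = T.filter (fun e => e.1 = a ∧ e.2 ≤ x - 1) ∪ T.filter (fun e => e = (a, x)) := by
    ext e
    simp only [Finset.mem_filter, Finset.mem_union, Prod.ext_iff]
    constructor
    · rintro ⟨he, h1, h2⟩
      by_cases h3 : e.2 ≤ x - 1
      · exact Or.inl ⟨he, h1, h3⟩
      · exact Or.inr ⟨he, h1, by omega⟩
    · rintro (⟨he, g1, g2⟩ | ⟨he, g1, g2⟩)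
      · exact ⟨he, g1, by omega⟩
      · exact ⟨he, g1, by omega⟩
  have hdisj : Disjoint (T.filter (fun e => e.1 = a ∧ e.2 ≤ x - 1))
      (T.filter (fun e => e = (a, x))) := by
    rw [Finset.disjoint_left]
    intro e he1 he2
    have g1 := (Finset.mem_filter.1 he1).2
    have g2 := (Finset.mem_filter.1 he2).2
    rw [g2] at g1
    dsimp only at g1
    omega
  rw [hu, Finset.card_union_of_disjoint hdisj, Finset.filter_eq']
  split_ifs <;> simp

/-- One-directional transfer of membership, given equal counts below `x`. -/
lemma mem_trans (n : ℕ) (A B : Finset (ℕ × ℕ))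
    (hdA : ∀ p ∈ A, IsDiagonal n p.1 p.2)
    (hncA : ∀ p ∈ A, ∀ q ∈ A, ¬ Crossing p q)
    (hcA : A.card = n - 3)
    (hdB : ∀ p ∈ B, IsDiagonal n p.1 p.2)
    (hncB : ∀ p ∈ B, ∀ q ∈ B, ¬ Crossing p q)
    (hcB : B.card = n - 3)
    (hM : A.val.map Prod.fst = B.val.map Prod.fst)
    (a x : ℕ)
    (IH : ∀ y, y < x → ∀ a' : ℕ,
      (A.filter fun e => e.1 = a' ∧ e.2 ≤ y).card
        = (B.filter fun e => e.1 = a' ∧ e.2 ≤ y).card)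
    (hmem : (a, x) ∈ A) : (a, x) ∈ B := by
  classical
  by_contra hnB
  obtain ⟨hg, hxn, hne0⟩ := hdA (a, x) hmem
  dsimp only at hg hxn hne0
  have hx1 : 1 ≤ x := by omega
  set j := (A.filter fun e => e.1 = a ∧ e.2 ≤ x).card with hj
  have hstepA := count_step A a x hx1
  have hstepB := count_step B a x hx1
  rw [if_pos hmem] at hstepA
  rw [if_neg hnB] at hstepB
  have hIH := IH (x - 1) (by omega) a
  have hBx : (B.filter fun e => e.1 = a ∧ e.2 ≤ x).card = j - 1 := by omega
  have hjx : j = (A.filter fun e => e.1 = a ∧ e.2 ≤ x - 1).card + 1 := by omega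
  -- total number of diagonals with tail a is the same in A and B
  have hm : (A.filter fun e => e.1 = a).card = (B.filter fun e => e.1 = a).card :=
    count_eq A B hM (fun t => t = a)
  have hmA : j ≤ (A.filter fun e => e.1 = a).card := by
    apply Finset.card_le_card
    intro e he
    have := Finset.mem_filter.1 he
    exact Finset.mem_filter.2 ⟨this.1, this.2.1⟩
  -- find a diagonal of B with tail a and head > x
  have hex : ∃ e ∈ B, e.1 = a ∧ x < e.2 := by
    by_contra hno
    push_neg at hno
    have : B.filter (fun e => e.1 = a) = B.filter (fun e => e.1 = a ∧ e.2 ≤ x) := by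
      ext e
      simp only [Finset.mem_filter]
      constructor
      · rintro ⟨he, h1⟩
        refine ⟨he, h1, ?_⟩
        by_contra hcon
        exact absurd (hno e he h1) (by omega)
      · rintro ⟨he, h1, -⟩; exact ⟨he, h1⟩
    rw [this] at hm
    omega
  have hCne : (B.filter fun e => e.1 = a ∧ x < e.2).Nonempty := by
    obtain ⟨e, he, h1, h2⟩ := hex
    exact ⟨e, Finset.mem_filter.2 ⟨he, h1, h2⟩⟩
  obtain ⟨e0, he0, hmin0⟩ :=
    (B.filter fun e => e.1 = a ∧ x < e.2).exists_min_image (fun e => e.2) hCne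
  have he0B := Finset.mem_of_mem_filter _ he0
  have he0p := (Finset.mem_filter.1 he0).2
  set c := e0.2 with hc
  have he0eq : e0 = (a, c) := Prod.ext he0p.1 rfl
  rw [he0eq] at he0B
  have hxc : x < c := he0p.2
  -- count of tail-a diagonals of B with head ≤ c equals j
  have hcnt : (B.filter fun e => e.1 = a ∧ e.2 ≤ c).card = j := by
    have hu : B.filter (fun e => e.1 = a ∧ e.2 ≤ c)
        = B.filter (fun e => e.1 = a ∧ e.2 ≤ x) ∪ {(a, c)} := by
      ext e
      simp only [Finset.mem_filter, Finset.mem_union, Finset.mem_singleton]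
      constructor
      · rintro ⟨he, h1, h2⟩
        by_cases h3 : e.2 ≤ x
        · exact Or.inl ⟨he, h1, h3⟩
        · right
          have heC : e ∈ B.filter (fun e => e.1 = a ∧ x < e.2) :=
            Finset.mem_filter.2 ⟨he, h1, by omega⟩
          have := hmin0 e heC
          have he2 : e.2 = c := by omega
          exact Prod.ext h1 he2
      · rintro (⟨he, h1, h2⟩ | rfl)
        · exact ⟨he, h1, by omega⟩
        · exact ⟨he0B, rfl, le_refl c⟩
    have hdisj : Disjoint (B.filter (fun e => e.1 = a ∧ e.2 ≤ x)) ({((a : ℕ), (c : ℕ))} : Finset (ℕ × ℕ)) := by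
      rw [Finset.disjoint_left]
      intro e he1 he2
      have g1 := (Finset.mem_filter.1 he1).2
      rw [Finset.mem_singleton] at he2
      rw [he2] at g1
      dsimp only at g1
      omega
    rw [hu, Finset.card_union_of_disjoint hdisj, Finset.card_singleton, hBx]
    omega
  -- apply the key lemma to (a,x) in A and (a,c) in B
  have hkeyA := (key_lemma n a x A hdA hncA hcA hmem).1
  have hkeyB := (key_lemma n a c B hdB hncB hcB he0B).2 x hxc
  rw [hcnt] at hkeyB
  have hNeq : (A.filter fun e => a < e.1 ∧ e.1 < x).card
      = (B.filter fun e => a < e.1 ∧ e.1 < x).card :=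
    count_eq A B hM (fun t => a < t ∧ t < x)
  omega

/-- Distinct triangulations of a convex `n`-gon have distinct decreasingly-ordered
sequences of tails of their diagonals: the map `Λ` is injective. -/
theorem tails_injective (n : ℕ) (A B : Finset (ℕ × ℕ))
    (hA : IsTriangulation n A) (hB : IsTriangulation n B)
    (h : tails A = tails B) : A = B := by
  classical
  obtain ⟨hdA, hncA, hcA⟩ := hA
  obtain ⟨hdB, hncB, hcB⟩ := hB
  have hM : A.val.map Prod.fst = B.val.map Prod.fst := by
    unfold tails at h
    have h1 := Multiset.sort_eq (A.val.map Prod.fst) (· ≥ ·)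
    have h2 := Multiset.sort_eq (B.val.map Prod.fst) (· ≥ ·)
    rw [← h1, ← h2]
    exact congrArg (fun l : List ℕ => (l : Multiset ℕ)) h
  have main : ∀ x a : ℕ, (A.filter fun e => e.1 = a ∧ e.2 ≤ x).card
      = (B.filter fun e => e.1 = a ∧ e.2 ≤ x).card := by
    intro x
    induction x using Nat.strong_induction_on with
    | _ x IH =>
    intro a
    rcases Nat.eq_zero_or_pos x with rfl | hx
    · have hz : ∀ T : Finset (ℕ × ℕ), (∀ p ∈ T, IsDiagonal n p.1 p.2) →
          T.filter (fun e : ℕ × ℕ => e.1 = a ∧ e.2 ≤ 0) = ∅ := by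
        intro T hd
        rw [Finset.filter_eq_empty_iff]
        intro e he
        have := (hd e he).1
        omega
      rw [hz A hdA, hz B hdB]
    · have hiff : ((a, x) ∈ A) ↔ ((a, x) ∈ B) := by
        constructor
        · exact mem_trans n A B hdA hncA hcA hdB hncB hcB hM a x
            (fun y hy a' => IH y hy a')
        · exact mem_trans n B A hdB hncB hcB hdA hncA hcA hM.symm a x
            (fun y hy a' => (IH y hy a').symm)
      have sA := count_step A a x hx
      have sB := count_step B a x hx
      have hIH := IH (x - 1) (by omega) a
      by_cases hm : (a, x) ∈ A
      · rw [if_pos hm] at sA; rw [if_pos (hiff.1 hm)] at sB; omega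
      · rw [if_neg hm] at sA; rw [if_neg (fun hb => hm (hiff.2 hb))] at sB; omega
  ext e
  obtain ⟨a, b⟩ := e
  constructor
  · intro hmem
    exact mem_trans n A B hdA hncA hcA hdB hncB hcB hM a b
      (fun y _ a' => main y a') hmem
  · intro hmem
    exact mem_trans n B A hdB hncB hcB hdA hncA hcA hM.symm a b
      (fun y _ a' => (main y a').symm) hmem
end

section
/- The map Λ sending a triangulation A of a convex (n+2)-gon to the partition (λ_1(A), ..., λ_{n-1}(A)) of decreasingly-ordered tails of its diagonals is a bijection from the set of triangulations of the (n+2)-gon onto the set Y_n of partitions λ with λ_k ≤ n - k for all k. -/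
/-- `lam T k` is the `k`-th largest tail `λ_k` of a diagonal of `T`
(`k ≥ 1`; it is `0` if `T` has fewer than `k` diagonals). -/
def lam (T : Finset (ℕ × ℕ)) : ℕ → ℕ :=
  fun k => if k = 0 then 0 else (tails T).getD (k - 1) 0

/-! ### Auxiliary lemmas -/

section Aux

lemma crossing_symm {p q : ℕ × ℕ} (h : Crossing p q) : Crossing q p := by
  unfold Crossing at *; tauto

lemma crossing_irrefl (p : ℕ × ℕ) : ¬ Crossing p p := by
  unfold Crossing; omega

lemma nc_bound_s5 : ∀ (k : ℕ) (G : Finset (ℕ × ℕ)) (l r : ℕ),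
    (r - l) + G.card ≤ k →
    (∀ p ∈ G, l ≤ p.1 ∧ p.1 < p.2 ∧ p.2 ≤ r) →
    (∀ p ∈ G, ∀ q ∈ G, ¬ Crossing p q) →
    G.card ≤ 2 * (r - l) - 1 ∧ ((l, r) ∉ G → G.card ≤ 2 * (r - l) - 2) := by
  intro k
  induction k with
  | zero =>
    intro G l r hk hb hnc
    have : G.card = 0 := by omega
    simp [this]
  | succ k ih =>
    intro G l r hk hb hnc
    by_cases hrl : r ≤ l + 1
    · -- tiny interval
      have hone : ∀ p ∈ G, p = (l, r) ∧ r = l + 1 := by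
        intro p hp
        have h := hb p hp
        have h1 : p.1 = l := by omega
        have h2 : p.2 = r := by omega
        have h3 : p = (p.1, p.2) := rfl
        rw [h3, h1, h2]
        exact ⟨rfl, by omega⟩
      by_cases hG : G = ∅
      · simp [hG]
      · obtain ⟨p, hp⟩ := Finset.nonempty_of_ne_empty hG
        obtain ⟨hp1, hr⟩ := hone p hp
        have hsub : G ⊆ {(l, r)} := by
          intro q hq; simp [(hone q hq).1]
        have hcard : G.card ≤ 1 := by
          calc G.card ≤ ({(l, r)} : Finset (ℕ × ℕ)).card := Finset.card_le_card hsub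
          _ = 1 := by simp
        constructor
        · omega
        · intro hnot
          exact absurd (hp1 ▸ hp) hnot
    · push_neg at hrl
      by_cases hAe : ∀ p ∈ G, p.1 ≠ l
      · -- recurse on [l+1, r]
        have hb' : ∀ p ∈ G, l + 1 ≤ p.1 ∧ p.1 < p.2 ∧ p.2 ≤ r := by
          intro p hp
          have h1 := hb p hp
          have h2 := hAe p hp
          omega
        have := ih G (l+1) r (by omega) hb' hnc
        constructor <;> [skip; intro _] <;> omega
      · push_neg at hAe
        obtain ⟨p₀, hp₀, hp₀l⟩ := hAe
        have hAne : ((G.filter (fun p => p.1 = l)).image Prod.snd).Nonempty :=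
          ⟨p₀.2, Finset.mem_image_of_mem _ (Finset.mem_filter.mpr ⟨hp₀, hp₀l⟩)⟩
        set c := ((G.filter (fun p => p.1 = l)).image Prod.snd).max' hAne with hc
        have hcG : (l, c) ∈ G := by
          have h := Finset.max'_mem _ hAne
          rw [← hc] at h
          obtain ⟨x, hx, hxc⟩ := Finset.mem_image.mp h
          obtain ⟨hxG, hx1⟩ := Finset.mem_filter.mp hx
          have : x = (l, c) := by
            have : x = (x.1, x.2) := rfl
            rw [this, hx1, hxc]
          exact this ▸ hxG
        have hcmax : ∀ p ∈ G, p.1 = l → p.2 ≤ c := by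
          intro p hp hpl
          exact Finset.le_max' _ _ (Finset.mem_image_of_mem _ (Finset.mem_filter.mpr ⟨hp, hpl⟩))
        have hlc : l < c := (hb _ hcG).2.1
        have hcr0 : c ≤ r := (hb _ hcG).2.2
        by_cases hcr : c = r
        · -- (l, r) ∈ G
          have h1 : (l, r) ∈ G := hcr ▸ hcG
          have hcard := Finset.card_erase_of_mem h1
          have hGpos : 1 ≤ G.card := Finset.card_pos.mpr ⟨_, h1⟩
          have hrec := ih (G.erase (l,r)) l r (by omega)
            (fun p hp => hb p (Finset.mem_of_mem_erase hp))
            (fun p hp q hq => hnc p (Finset.mem_of_mem_erase hp) q (Finset.mem_of_mem_erase hq))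
          have h3 := hrec.2 (Finset.notMem_erase _ _)
          constructor
          · omega
          · intro h; exact absurd h1 h
        · have hcr' : c < r := lt_of_le_of_ne hcr0 hcr
          have hcover : ∀ p ∈ G, p.2 ≤ c ∨ c ≤ p.1 := by
            intro p hp
            by_cases hp1 : p.1 = l
            · exact Or.inl (hcmax p hp hp1)
            · have hx := hnc (l, c) hcG p hp
              unfold Crossing at hx
              simp only [not_or] at hx
              have hb1 := hb p hp
              omega
          set G₁ := G.filter (fun p => p.2 ≤ c) with hG₁
          set G₂ := G.filter (fun p => c ≤ p.1 ∧ ¬ p.2 ≤ c) with hG₂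
          have hunion : G = G₁ ∪ G₂ := by
            ext p
            simp only [hG₁, hG₂, Finset.mem_union, Finset.mem_filter]
            constructor
            · intro hp
              have := hcover p hp
              by_cases h2 : p.2 ≤ c
              · exact Or.inl ⟨hp, h2⟩
              · exact Or.inr ⟨hp, by omega, h2⟩
            · rintro (⟨hp, _⟩ | ⟨hp, _⟩) <;> exact hp
          have hdisj : Disjoint G₁ G₂ := by
            rw [Finset.disjoint_filter]
            intro p _ h1 h2
            exact h2.2 h1
          have hcard : G.card = G₁.card + G₂.card := by
            rw [hunion]; exact Finset.card_union_of_disjoint hdisj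
          have hc1 : G₁.card ≤ G.card := Finset.card_filter_le _ _
          have hc2 : G₂.card ≤ G.card := Finset.card_filter_le _ _
          have hrec1 := (ih G₁ l c (by omega)
            (fun p hp => by
              have h1 := hb p (Finset.mem_of_mem_filter p hp)
              have h2 := (Finset.mem_filter.mp hp).2
              exact ⟨h1.1, h1.2.1, h2⟩)
            (fun p hp q hq => hnc p (Finset.mem_of_mem_filter p hp) q (Finset.mem_of_mem_filter q hq))).1
          have hrec2 := (ih G₂ c r (by omega)
            (fun p hp => by
              have h1 := hb p (Finset.mem_of_mem_filter p hp)
              have h2 := (Finset.mem_filter.mp hp).2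
              exact ⟨h2.1, h1.2.1, h1.2.2⟩)
            (fun p hp q hq => hnc p (Finset.mem_of_mem_filter p hp) q (Finset.mem_of_mem_filter q hq))).1
          constructor
          · omega
          · intro _; omega

lemma card_nc_le (m : ℕ) (hm : 3 ≤ m) (S : Finset (ℕ × ℕ))
    (hd : ∀ p ∈ S, IsDiagonal m p.1 p.2)
    (hnc : ∀ p ∈ S, ∀ q ∈ S, ¬ Crossing p q) : S.card ≤ m - 3 := by
  classical
  set B : Finset (ℕ × ℕ) :=
    ((Finset.range (m-1)).image (fun i => (i, i+1))) ∪ {(0, m-1)} with hB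
  have hBmem : ∀ p ∈ B, (∃ i, i + 1 ≤ m - 1 ∧ p = (i, i+1)) ∨ p = (0, m-1) := by
    intro p hp
    rw [hB] at hp
    rcases Finset.mem_union.mp hp with h | h
    · obtain ⟨i, hi, rfl⟩ := Finset.mem_image.mp h
      exact Or.inl ⟨i, by simpa using Finset.mem_range.mp hi, rfl⟩
    · exact Or.inr (Finset.mem_singleton.mp h)
  -- B crosses nothing
  have hBnc : ∀ p ∈ B, ∀ q : ℕ × ℕ, q.1 < q.2 → q.2 ≤ m - 1 → ¬ Crossing p q ∧ ¬ Crossing q p := by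
    intro p hp q h1 h2
    rcases hBmem p hp with ⟨i, hi, rfl⟩ | rfl <;>
      (unfold Crossing; simp only [not_or]; omega)
  have hbound : ∀ p ∈ S ∪ B, 0 ≤ p.1 ∧ p.1 < p.2 ∧ p.2 ≤ m - 1 := by
    intro p hp
    rcases Finset.mem_union.mp hp with h | h
    · have := hd p h
      unfold IsDiagonal at this
      omega
    · rcases hBmem p h with ⟨i, hi, rfl⟩ | rfl <;> simp <;> omega
  have hncU : ∀ p ∈ S ∪ B, ∀ q ∈ S ∪ B, ¬ Crossing p q := by
    intro p hp q hq
    rcases Finset.mem_union.mp hp with hpS | hpB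
    · rcases Finset.mem_union.mp hq with hqS | hqB
      · exact hnc p hpS q hqS
      · have h := hbound p (Finset.mem_union_left _ hpS)
        exact (hBnc q hqB p h.2.1 h.2.2).2
    · have h := hbound q hq
      exact (hBnc p hpB q h.2.1 h.2.2).1
  have hdisj : Disjoint S B := by
    rw [Finset.disjoint_left]
    intro p hpS hpB
    have hdp := hd p hpS
    unfold IsDiagonal at hdp
    rcases hBmem p hpB with ⟨i, _, rfl⟩ | rfl
    · simp at hdp
    · simp at hdp
  have hBcard : B.card = m := by
    rw [hB]
    rw [Finset.card_union_of_disjoint]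
    · rw [Finset.card_image_of_injective _ (fun a b h => by simpa using (Prod.ext_iff.mp h).1)]
      simp; omega
    · rw [Finset.disjoint_right]
      intro p hp hpi
      obtain ⟨i, hi, hieq⟩ := Finset.mem_image.mp hpi
      rw [Finset.mem_singleton.mp hp] at hieq
      have := Prod.ext_iff.mp hieq
      simp at this
      omega
  have hUcard : (S ∪ B).card = S.card + m := by
    rw [Finset.card_union_of_disjoint hdisj, hBcard]
  have := (nc_bound_s5 ((m - 1) + (S ∪ B).card) (S ∪ B) 0 (m-1) (le_refl _) (by simpa using hbound) hncU).1
  omega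

lemma max_nc (m : ℕ) (hm : 3 ≤ m) (T : Finset (ℕ × ℕ))
    (hd : ∀ p ∈ T, IsDiagonal m p.1 p.2)
    (hnc : ∀ p ∈ T, ∀ q ∈ T, ¬ Crossing p q)
    (hcard : T.card = m - 3)
    (d : ℕ × ℕ) (hdd : IsDiagonal m d.1 d.2)
    (hdnc : ∀ p ∈ T, ¬ Crossing d p) : d ∈ T := by
  by_contra hdT
  have h1 : (insert d T).card = m - 2 := by
    rw [Finset.card_insert_of_notMem hdT, hcard]; omega
  have h2 := card_nc_le m hm (insert d T)
    (by intro p hp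
        rcases Finset.mem_insert.mp hp with rfl | hp
        · exact hdd
        · exact hd p hp)
    (by intro p hp q hq
        rcases Finset.mem_insert.mp hp with rfl | hp <;> rcases Finset.mem_insert.mp hq with h | hq
        · rw [h] at *; exact crossing_irrefl _
        · exact hdnc q hq
        · rw [h]; intro hc; exact hdnc p hp (crossing_symm hc)
        · exact hnc p hp q hq)
  omega

lemma ear (n : ℕ) (hn : 2 ≤ n) (T : Finset (ℕ × ℕ))
    (hd : ∀ p ∈ T, IsDiagonal (n+2) p.1 p.2)
    (hnc : ∀ p ∈ T, ∀ q ∈ T, ¬ Crossing p q)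
    (hcard : T.card = n - 1)
    (a : ℕ) (hmax : ∀ p ∈ T, p.1 ≤ a) (hmem : ∃ b, (a, b) ∈ T) :
    (a, a+2) ∈ T := by
  classical
  obtain ⟨b', hb'⟩ := hmem
  have hAne : ((T.filter (fun p => p.1 = a)).image Prod.snd).Nonempty := by
    refine ⟨b', Finset.mem_image.mpr ⟨(a, b'), Finset.mem_filter.mpr ⟨hb', rfl⟩, rfl⟩⟩
  set b := ((T.filter (fun p => p.1 = a)).image Prod.snd).min' hAne with hbdef
  have hbT : (a, b) ∈ T := by
    have h := Finset.min'_mem _ hAne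
    rw [← hbdef] at h
    obtain ⟨x, hx, hxc⟩ := Finset.mem_image.mp h
    obtain ⟨hxG, hx1⟩ := Finset.mem_filter.mp hx
    have hxx : x = (a, b) := by
      have : x = (x.1, x.2) := rfl
      rw [this, hx1, hxc]
    exact hxx ▸ hxG
  have hbmin : ∀ p ∈ T, p.1 = a → b ≤ p.2 := by
    intro p hp hpa
    exact Finset.min'_le _ _ (Finset.mem_image_of_mem _ (Finset.mem_filter.mpr ⟨hp, hpa⟩))
  have hbd := hd _ hbT
  unfold IsDiagonal at hbd
  simp only at hbd
  by_cases hb2 : b = a + 2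
  · exact hb2 ▸ hbT
  · exfalso
    have hb3 : a + 3 ≤ b := by omega
    have hdT : (a+1, b) ∈ T := by
      apply max_nc (n+2) (by omega) T hd hnc (by omega) (a+1, b)
      · unfold IsDiagonal; simp only; omega
      · intro p hp
        intro hc
        have hpmax := hmax p hp
        have hpd := hd p hp
        unfold IsDiagonal at hpd
        rcases hc with ⟨h1, h2, h3⟩ | ⟨h1, h2, h3⟩
        · simp only at h1 h2 h3; omega
        · simp only at h1 h2 h3
          by_cases hpa : p.1 = a
          · exact absurd (hbmin p hp hpa) (by omega)
          · exact hnc (a,b) hbT p hp (Or.inr (by refine ⟨?_, ?_, ?_⟩ <;> simp only <;> omega))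
    have := hmax _ hdT
    simp only at this; omega

def sfun (a v : ℕ) : ℕ := if v ≤ a then v else v + 1
def tfun (a v : ℕ) : ℕ := if v ≤ a then v else v - 1
def smap (a : ℕ) (p : ℕ × ℕ) : ℕ × ℕ := (sfun a p.1, sfun a p.2)
def tmap (a : ℕ) (p : ℕ × ℕ) : ℕ × ℕ := (tfun a p.1, tfun a p.2)

lemma sfun_inj (a : ℕ) : Function.Injective (sfun a) := by
  intro v w h; unfold sfun at h; split_ifs at h <;> omega

lemma smap_inj (a : ℕ) : Function.Injective (smap a) := by
  intro p q h
  have h1 := congrArg Prod.fst h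
  have h2 := congrArg Prod.snd h
  simp only [smap] at h1 h2
  have := sfun_inj a h1
  have := sfun_inj a h2
  ext <;> assumption

lemma scross (a : ℕ) (p q : ℕ × ℕ) : Crossing (smap a p) (smap a q) ↔ Crossing p q := by
  unfold Crossing smap sfun
  simp only
  split_ifs <;> omega

lemma tcross (a : ℕ) (p q : ℕ × ℕ) (h1 : p.1 ≤ a) (h2 : p.2 ≠ a+1)
    (h3 : q.1 ≤ a) (h4 : q.2 ≠ a+1) : Crossing (tmap a p) (tmap a q) ↔ Crossing p q := by
  unfold Crossing tmap tfun
  simp only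
  split_ifs <;> omega

lemma insert_tri (n a : ℕ) (hn : 2 ≤ n) (ha : a + 1 ≤ n) (T' : Finset (ℕ × ℕ))
    (hT' : IsTriangulation (n+1) T') (htl : ∀ p ∈ T', p.1 ≤ a) :
    IsTriangulation (n+2) (insert (a, a+2) (T'.image (smap a))) ∧
    (insert (a, a+2) (T'.image (smap a))).val.map Prod.fst
      = a ::ₘ T'.val.map Prod.fst := by
  obtain ⟨hd, hnc, hcard⟩ := hT'
  have hnotmem : (a, a+2) ∉ T'.image (smap a) := by
    intro h
    obtain ⟨p, hp, heq⟩ := Finset.mem_image.mp h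
    have h1 := congrArg Prod.fst heq
    have h2 := congrArg Prod.snd heq
    simp only [smap, sfun] at h1 h2
    have hp1 := htl p hp
    have hpd := (hd p hp).1
    split_ifs at h1 h2 <;> omega
  have himgmem : ∀ p ∈ T'.image (smap a), ∃ q ∈ T', p = smap a q := by
    intro p hp
    obtain ⟨q, hq, heq⟩ := Finset.mem_image.mp hp
    exact ⟨q, hq, heq.symm⟩
  refine ⟨⟨?_, ?_, ?_⟩, ?_⟩
  · -- diagonals
    intro p hp
    rcases Finset.mem_insert.mp hp with rfl | hp
    · unfold IsDiagonal; simp only; omega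
    · obtain ⟨q, hq, rfl⟩ := himgmem p hp
      have h1 := hd q hq
      have h2 := htl q hq
      unfold IsDiagonal at *
      unfold smap sfun
      simp only at *
      split_ifs <;> omega
  · -- noncrossing
    intro p hp q hq
    rcases Finset.mem_insert.mp hp with rfl | hp <;> rcases Finset.mem_insert.mp hq with h | hq
    · rw [h] at *; unfold Crossing; omega
    · obtain ⟨q', hq', rfl⟩ := himgmem q hq
      have h1 := (hd q' hq').1
      have h2 := htl q' hq'
      unfold Crossing smap sfun
      simp only
      split_ifs <;> omega
    · rw [h]
      obtain ⟨p', hp', rfl⟩ := himgmem p hp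
      have h1 := (hd p' hp').1
      have h2 := htl p' hp'
      unfold Crossing smap sfun
      simp only
      split_ifs <;> omega
    · obtain ⟨p', hp', rfl⟩ := himgmem p hp
      obtain ⟨q', hq', rfl⟩ := himgmem q hq
      rw [scross]
      exact hnc p' hp' q' hq'
  · -- card
    rw [Finset.card_insert_of_notMem hnotmem,
      Finset.card_image_of_injective _ (smap_inj a), hcard]
    omega
  · -- tails multiset
    rw [Finset.insert_val, Multiset.ndinsert_of_notMem (by simpa using hnotmem)]
    rw [Multiset.map_cons]
    congr 1
    rw [Finset.image_val_of_injOn ((smap_inj a).injOn)]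
    rw [Multiset.map_map]
    apply Multiset.map_congr rfl
    intro p hp
    have := htl p hp
    simp only [Function.comp, smap, sfun]
    split_ifs <;> omega

lemma remove_tri (n a : ℕ) (hn : 2 ≤ n) (T : Finset (ℕ × ℕ))
    (hT : IsTriangulation (n+2) T)
    (hmax : ∀ p ∈ T, p.1 ≤ a) (hmem : (a, a+2) ∈ T) :
    IsTriangulation (n+1) ((T.erase (a, a+2)).image (tmap a)) ∧
    (∀ p ∈ (T.erase (a, a+2)).image (tmap a), p.1 ≤ a) ∧
    ((T.erase (a, a+2)).image (tmap a)).val.map Prod.fst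
        = (T.erase (a, a+2)).val.map Prod.fst ∧
    T = insert (a, a+2) (((T.erase (a, a+2)).image (tmap a)).image (smap a)) := by
  obtain ⟨hd, hnc, hcard⟩ := hT
  set E := T.erase (a, a+2) with hE
  have hEfacts : ∀ p ∈ E, p.1 ≤ a ∧ p.2 ≠ a + 1 ∧ IsDiagonal (n+2) p.1 p.2
      ∧ ¬(p.1 = a ∧ p.2 = a + 2) := by
    intro p hp
    have hpT := Finset.mem_of_mem_erase hp
    have hpne := Finset.ne_of_mem_erase hp
    have h1 := hmax p hpT
    have hpd := hd p hpT
    refine ⟨h1, ?_, hpd, ?_⟩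
    · intro h2
      apply hnc (a, a+2) hmem p hpT
      right
      have := hpd.1
      simp only
      omega
    · intro ⟨ha1, ha2⟩
      exact hpne (Prod.ext ha1 ha2)
  have hinjOn : Set.InjOn (tmap a) E := by
    intro p hp q hq h
    obtain ⟨hp1, hp2, hpd, -⟩ := hEfacts p hp
    obtain ⟨hq1, hq2, hqd, -⟩ := hEfacts q hq
    have h1 := congrArg Prod.fst h
    have h2 := congrArg Prod.snd h
    simp only [tmap, tfun] at h1 h2
    have := hpd.1
    have := hqd.1
    ext
    · split_ifs at h1 <;> omega
    · split_ifs at h2 <;> omega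
  have hEcard : E.card = n - 2 := by
    rw [hE, Finset.card_erase_of_mem hmem, hcard]; omega
  have himgmem : ∀ p ∈ E.image (tmap a), ∃ q ∈ E, p = tmap a q := by
    intro p hp
    obtain ⟨q, hq, heq⟩ := Finset.mem_image.mp hp
    exact ⟨q, hq, heq.symm⟩
  have haQ : a + 2 ≤ n + 1 := by
    have := (hd _ hmem).2.1
    simpa using this
  refine ⟨⟨?_, ?_, ?_⟩, ?_, ?_, ?_⟩
  · intro p hp
    obtain ⟨q, hq, rfl⟩ := himgmem p hp
    obtain ⟨hq1, hq2, hqd, hqne⟩ := hEfacts q hq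
    unfold IsDiagonal at *
    unfold tmap tfun
    simp only at *
    split_ifs <;> omega
  · intro p hp q hq
    obtain ⟨p', hp', rfl⟩ := himgmem p hp
    obtain ⟨q', hq', rfl⟩ := himgmem q hq
    obtain ⟨hp1, hp2, -, -⟩ := hEfacts p' hp'
    obtain ⟨hq1, hq2, -, -⟩ := hEfacts q' hq'
    rw [tcross a p' q' hp1 hp2 hq1 hq2]
    exact hnc p' (Finset.mem_of_mem_erase hp') q' (Finset.mem_of_mem_erase hq')
  · rw [Finset.card_image_of_injOn hinjOn, hEcard]; omega
  · intro p hp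
    obtain ⟨q, hq, rfl⟩ := himgmem p hp
    have := (hEfacts q hq).1
    simp only [tmap, tfun]
    split_ifs <;> omega
  · rw [Finset.image_val_of_injOn hinjOn, Multiset.map_map]
    apply Multiset.map_congr rfl
    intro p hp
    have := (hEfacts p hp).1
    simp only [Function.comp, tmap, tfun]
    split_ifs <;> omega
  · have hst : ∀ p ∈ E, smap a (tmap a p) = p := by
      intro p hp
      obtain ⟨hp1, hp2, hpd, -⟩ := hEfacts p hp
      have := hpd.1
      ext
      · simp only [smap, tmap, sfun, tfun]; split_ifs <;> omega
      · simp only [smap, tmap, sfun, tfun]; split_ifs <;> omega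
    rw [Finset.image_image]
    rw [show Finset.image (smap a ∘ tmap a) E = Finset.image id E from
      Finset.image_congr (fun p hp => hst p hp), Finset.image_id]
    exact (Finset.insert_erase hmem).symm

lemma sort_cons_max (a : ℕ) (M : Multiset ℕ) (h : ∀ x ∈ M, x ≤ a) :
    (a ::ₘ M).sort (· ≥ ·) = a :: M.sort (· ≥ ·) := by
  refine (fun hp h1 h2 => List.Perm.eq_of_pairwise' (r := (· ≥ ·)) h1 h2 hp) ?_ ?_ ?_
  · have h1 : ((a ::ₘ M).sort (· ≥ ·) : Multiset ℕ) = ((a :: M.sort (· ≥ ·) : List ℕ) : Multiset ℕ) := by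
      rw [Multiset.sort_eq]
      show a ::ₘ M = ↑(a :: M.sort (· ≥ ·))
      rw [← Multiset.cons_coe, Multiset.sort_eq]
    exact Multiset.coe_eq_coe.mp h1
  · exact Multiset.pairwise_sort _ _
  · refine List.pairwise_cons.mpr ⟨?_, Multiset.pairwise_sort _ _⟩
    intro b hb
    exact h b ((Multiset.mem_sort _).mp hb)

lemma tails_length (T : Finset (ℕ × ℕ)) : (tails T).length = T.card := by
  rw [tails, Multiset.length_sort, Multiset.card_map]
  rfl

lemma sorted_getD_anti {l : List ℕ} (h : List.Pairwise (· ≥ ·) l) {i j : ℕ}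
    (hij : i ≤ j) : l.getD j 0 ≤ l.getD i 0 := by
  by_cases hj : j < l.length
  · have hi : i < l.length := lt_of_le_of_lt hij hj
    rw [List.getD_eq_getElem _ _ hj, List.getD_eq_getElem _ _ hi]
    rcases eq_or_lt_of_le hij with rfl | hlt
    · exact le_refl _
    · exact List.pairwise_iff_getElem.mp h i j hi hj hlt
  · rw [List.getD_eq_default _ _ (by omega)]
    exact Nat.zero_le _

lemma getD_mem {l : List ℕ} {i : ℕ} (h : i < l.length) : l.getD i 0 ∈ l := by
  rw [List.getD_eq_getElem _ _ h]
  exact List.getElem_mem h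

lemma le_head_of_sorted {l : List ℕ} (h : List.Pairwise (· ≥ ·) l) {x : ℕ}
    (hx : x ∈ l) : x ≤ l.getD 0 0 := by
  obtain ⟨i, hi, rfl⟩ := List.mem_iff_getElem.mp hx
  rw [← List.getD_eq_getElem _ _ hi]
  exact sorted_getD_anti h (Nat.zero_le i)

lemma tails_sorted (T : Finset (ℕ × ℕ)) : List.Pairwise (· ≥ ·) (tails T) :=
  Multiset.pairwise_sort _ _

lemma tail_le_lam1 (T : Finset (ℕ × ℕ)) (p : ℕ × ℕ) (hp : p ∈ T) : p.1 ≤ lam T 1 := by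
  have h1 : p.1 ∈ tails T := by
    rw [tails, Multiset.mem_sort]
    exact Multiset.mem_map_of_mem _ hp
  have := le_head_of_sorted (tails_sorted T) h1
  simpa [lam] using this

lemma lam_succ (T : Finset (ℕ × ℕ)) (k : ℕ) : lam T (k+1) = (tails T).getD k 0 := by
  simp [lam]

lemma lam_empty : lam (∅ : Finset (ℕ × ℕ)) = fun _ => 0 := by
  funext k
  have h : tails (∅ : Finset (ℕ × ℕ)) = [] := by
    simp [tails]
  cases k <;> simp [lam, h]

/-- The key step lemma: decomposing a triangulation of the `(m+4)`-gon. -/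
lemma step_lemma (m : ℕ) (T : Finset (ℕ × ℕ)) (hT : IsTriangulation (m+4) T) :
    ∃ T'' : Finset (ℕ × ℕ), IsTriangulation (m+3) T'' ∧
      lam T 1 + 2 ≤ m + 3 ∧
      (∀ k, 1 ≤ k → lam T (k+1) = lam T'' k) ∧
      T = insert (lam T 1, lam T 1 + 2) (T''.image (smap (lam T 1))) := by
  obtain ⟨hd, hnc, hcard⟩ := hT
  set a := lam T 1 with hadef
  have hcard' : T.card = m + 1 := by omega
  have hlen : (tails T).length = m + 1 := by rw [tails_length, hcard']
  have hamem : a ∈ tails T := by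
    rw [hadef, lam]
    simp only [if_neg (by omega : ¬ (1:ℕ) = 0)]
    exact getD_mem (by omega)
  have hamem' : a ∈ T.val.map Prod.fst := by
    rw [tails, Multiset.mem_sort] at hamem
    exact hamem
  obtain ⟨p₀, hp₀, hp₀a⟩ := Multiset.mem_map.mp hamem'
  have hp₀T : p₀ ∈ T := hp₀
  have hmax : ∀ p ∈ T, p.1 ≤ a := fun p hp => tail_le_lam1 T p hp
  have hp₀d := hd p₀ hp₀T
  have haQ : a + 2 ≤ m + 3 := by
    obtain ⟨h1, h2, -⟩ := hp₀d
    omega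
  have hear : (a, a+2) ∈ T := by
    apply ear (m+2) (by omega) T hd hnc (by omega) a hmax
    exact ⟨p₀.2, by rwa [show (a, p₀.2) = p₀ from by rw [← hp₀a]] ⟩
  obtain ⟨htri'', hle'', hmeq'', hrec''⟩ :=
    remove_tri (m+2) a (by omega) T ⟨hd, hnc, hcard⟩ hmax hear
  set T'' := (T.erase (a, a+2)).image (tmap a) with hT''def
  refine ⟨T'', htri'', haQ, ?_, hrec''⟩
  -- tails relation
  have hTval : T.val.map Prod.fst = a ::ₘ (T.erase (a,a+2)).val.map Prod.fst := by
    have h1 : T.val = (a, a+2) ::ₘ (T.erase (a,a+2)).val := by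
      rw [Finset.erase_val]
      exact (Multiset.cons_erase (Finset.mem_val.mpr hear)).symm
    rw [h1, Multiset.map_cons]
  have hsortrel : tails T = a :: tails T'' := by
    rw [tails, tails, hmeq'', hTval]
    apply sort_cons_max
    intro x hx
    rw [← hmeq''] at hx
    obtain ⟨q, hq, rfl⟩ := Multiset.mem_map.mp hx
    exact hle'' q hq
  intro k hk
  rw [lam_succ, hsortrel]
  rw [lam]
  simp only [if_neg (by omega : ¬ k = 0)]
  have hk1 : k = (k - 1) + 1 := by omega
  rw [hk1, List.getD_cons_succ]
  congr 1

end Aux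

/-- `Λ` is a bijection from the set of triangulations of the `(n+2)`-gon onto
the set `Y_n` of partitions `λ` with `λ_k ≤ n - k` for all `k`. -/
theorem lam_bijective (n : ℕ) :
    (∀ T : Finset (ℕ × ℕ), IsTriangulation (n + 2) T → InY n (lam T)) ∧
    (∀ f : ℕ → ℕ, InY n f →
      ∃! T : Finset (ℕ × ℕ), IsTriangulation (n + 2) T ∧ lam T = f) := by
  induction n using Nat.strong_induction_on with
  | _ n ih =>
  rcases n with _ | _ | m
  -- n = 0 and n = 1
  case zero | succ.zero =>
    constructor
    · intro T hT
      have hT0 : T = ∅ := Finset.card_eq_zero.mp (by have := hT.2.2; omega)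
      rw [hT0, lam_empty]
      exact ⟨rfl, fun k _ => le_refl _, fun k _ => Nat.zero_le _⟩
    · intro f hf
      have hf0 : f = fun _ => 0 := by
        funext k
        rcases k with _ | j
        · exact hf.1
        · have := hf.2.2 (j+1) (by omega)
          omega
      refine ⟨∅, ⟨⟨?_, ?_, ?_⟩, ?_⟩, ?_⟩
      · intro p hp; simp at hp
      · intro p hp; simp at hp
      · simp
      · rw [lam_empty, hf0]
      · intro T₁ ⟨hT₁, _⟩
        exact Finset.card_eq_zero.mp (by have := hT₁.2.2; omega)
  case succ.succ =>
    obtain ⟨ihP, ihQ⟩ := ih (m+1) (by omega)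
    constructor
    · -- forward direction
      intro T hT
      obtain ⟨T'', htri'', haQ, hlamrel, -⟩ := step_lemma m T (by exact hT)
      have hIH := ihP T'' (by exact htri'')
      refine ⟨rfl, ?_, ?_⟩
      · intro k hk
        rw [lam_succ]
        rw [lam]
        simp only [if_neg (by omega : ¬ k = 0)]
        exact sorted_getD_anti (tails_sorted T) (by omega)
      · intro k hk
        rcases k with _ | j
        · omega
        · rcases j with _ | i
          · -- k = 1
            have he : lam T (0+1) = lam T 1 := by norm_num
            omega
          · -- k = i + 2
            have h1 := hlamrel (i+1) (by omega)
            have h2 := hIH.2.2 (i+1) (by omega)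
            omega
    · -- existence and uniqueness
      intro f hf
      set f' : ℕ → ℕ := fun k => if k = 0 then 0 else f (k+1) with hf'def
      have hf' : InY (m+1) f' := by
        refine ⟨rfl, ?_, ?_⟩
        · intro k hk
          simp only [hf'def, if_neg (by omega : ¬ k + 1 = 0), if_neg (by omega : ¬ k = 0)]
          exact hf.2.1 (k+1) (by omega)
        · intro k hk
          simp only [hf'def, if_neg (by omega : ¬ k = 0)]
          have := hf.2.2 (k+1) (by omega)
          omega
      obtain ⟨T', ⟨hT'tri, hT'lam⟩, hT'uniq⟩ := ihQ f' hf'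
      set a := f 1 with hadef
      have ha1 : a + 1 ≤ m + 2 := by
        have := hf.2.2 1 (by omega)
        omega
      have htl' : ∀ p ∈ T', p.1 ≤ a := by
        intro p hp
        have h1 := tail_le_lam1 T' p hp
        have h2 : lam T' 1 = f 2 := by
          rw [hT'lam]; simp [hf'def]
        have h3 := hf.2.1 1 (by omega)
        norm_num at h3
        omega
      obtain ⟨hTtri, hTmeq⟩ := insert_tri (m+2) a (by omega) ha1 T' (by exact hT'tri) htl'
      set T := insert (a, a+2) (T'.image (smap a)) with hTdef
      have hsortrel : tails T = a :: tails T' := by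
        rw [tails, tails, hTmeq]
        apply sort_cons_max
        intro x hx
        obtain ⟨q, hq, rfl⟩ := Multiset.mem_map.mp hx
        exact htl' q hq
      have hTlam : lam T = f := by
        funext k
        rcases k with _ | j
        · exact hf.1.symm
        · rw [lam_succ, hsortrel]
          rcases j with _ | i
          · rfl
          · rw [List.getD_cons_succ]
            have h1 : lam T' (i+1) = f' (i+1) := by rw [hT'lam]
            rw [lam_succ] at h1
            rw [h1]
            simp [hf'def]
      refine ⟨T, ⟨by exact hTtri, hTlam⟩, ?_⟩
      intro T₁ ⟨hT₁tri, hT₁lam⟩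
      obtain ⟨T₁'', htri₁'', haQ₁, hlamrel₁, hrec₁⟩ := step_lemma m T₁ (by exact hT₁tri)
      have ha₁ : lam T₁ 1 = a := by rw [hT₁lam]
      have hT₁''lam : lam T₁'' = f' := by
        funext k
        rcases k with _ | j
        · rfl
        · have h1 := hlamrel₁ (j+1) (by omega)
          rw [← h1, hT₁lam]
          simp [hf'def]
      have hT₁''eq : T₁'' = T' := hT'uniq T₁'' ⟨by exact htri₁'', hT₁''lam⟩
      rw [hrec₁, ha₁, hT₁''eq]
end

section
/- The diagram flip operation is an involution: if N is obtained from M by a flip in row k with the row-lengths case μ_{k+1} = μ_k, then M is obtained back from N by a flip (in the appropriate row), and vice versa. -/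
/-- `f` is a Young diagram (partition): weakly decreasing rows `f 1 ≥ f 2 ≥ …`,
finitely many of them nonzero. -/
def IsPartition (f : ℕ → ℕ) : Prop :=
  f 0 = 0 ∧ (∀ k, 1 ≤ k → f (k + 1) ≤ f k) ∧ ∃ B, ∀ k, B ≤ k → f k = 0

/-- The multiset of the lengths of rows `1, …, B` of the diagram `f`. -/
def rowMultiset (f : ℕ → ℕ) (B : ℕ) : Multiset ℕ :=
  (Multiset.range B).map (fun j => f (j + 1))

/-- The length `l` of the row replacing row `k` under the flip in row `k` of the
diagram `M`:  if `μ_{k+1} = μ_k`, then `l = k + μ_k - max T_k` where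
`T_k = {m : m < k, m + μ_m ≥ k + μ_k}` (and `l = k + μ_k` if `T_k = ∅`);
if `μ_{k+1} < μ_k`, then `l = k + μ_k - min T_k` where
`T_k = {m : m > k, m + μ_m ≥ k + μ_k}` (and `l = 0` if `T_k = ∅`). -/
noncomputable def flipLength (M : ℕ → ℕ) (k : ℕ) : ℕ := by
  classical
  exact
  if M (k + 1) = M k then
    (if h : ((Finset.Ico 1 k).filter (fun m => k + M k ≤ m + M m)).Nonempty
     then k + M k - ((Finset.Ico 1 k).filter (fun m => k + M k ≤ m + M m)).max' h
     else k + M k)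
  else
    (if h : {m : ℕ | k < m ∧ k + M k ≤ m + M m}.Nonempty
     then k + M k - sInf {m : ℕ | k < m ∧ k + M k ≤ m + M m}
     else 0)

/-- `N` is obtained from `M` by the flip in row `k`: throw away row `k` of `M`
(it may have length `0`) and insert a row of length `flipLength M k` in the
unique place making the result a Young diagram.  (Equivalently, for every
sufficiently long initial segment of rows, the multisets of row lengths agree
after the exchange.) -/
def DiagramFlip (M : ℕ → ℕ) (k : ℕ) (N : ℕ → ℕ) : Prop :=
  IsPartition M ∧ IsPartition N ∧ 1 ≤ k ∧
  ∃ B₀, ∀ B, B₀ ≤ B →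
    rowMultiset N B = flipLength M k ::ₘ (rowMultiset M B).erase (M k)

lemma part_anti {f : ℕ → ℕ} (hf : IsPartition f) {i j : ℕ} (hi : 1 ≤ i) (hij : i ≤ j) :
    f j ≤ f i := by
  obtain ⟨-, hdec, -⟩ := hf
  have key : ∀ n, f (i + n) ≤ f i := by
    intro n
    induction n with
    | zero => simp
    | succ n ih => exact le_trans (hdec (i + n) (le_trans hi (Nat.le_add_right _ _))) ih
  have := key (j - i)
  rwa [Nat.add_sub_cancel' hij] at this

lemma rowMultiset_eq_sum (f : ℕ → ℕ) (B : ℕ) :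
    rowMultiset f B = ∑ j ∈ Finset.Ico 1 (B + 1), ({f j} : Multiset ℕ) := by
  induction B with
  | zero => simp [rowMultiset]
  | succ B ih =>
    rw [rowMultiset, Multiset.range_succ, Multiset.map_cons,
      Finset.sum_Ico_succ_top (by omega), ← rowMultiset, ih,
      ← Multiset.singleton_add, add_comm]

lemma sum_shift (f : ℕ → Multiset ℕ) (a b : ℕ) :
    ∑ j ∈ Finset.Ico (a + 1) (b + 1), f (j - 1) = ∑ j ∈ Finset.Ico a b, f j := by
  rw [Finset.sum_Ico_eq_sum_range, Finset.sum_Ico_eq_sum_range]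
  have h : b + 1 - (a + 1) = b - a := by omega
  rw [h]
  exact Finset.sum_congr rfl (fun i _ => by congr 1; omega)

lemma partition_ext (P Q : ℕ → ℕ) (hP : IsPartition P) (hQ : IsPartition Q)
    (h : ∃ B₀, ∀ B, B₀ ≤ B → rowMultiset P B = rowMultiset Q B) : P = Q := by
  obtain ⟨B₀, hB⟩ := h
  funext j
  match j with
  | 0 => rw [hP.1, hQ.1]
  | (i + 1) =>
    set B := max B₀ (i + 1) with hBdef
    have hiB : i < B := lt_of_lt_of_le (Nat.lt_succ_self i) (le_max_right _ _)
    have hm := hB B (le_max_left _ _)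
    have hcoe : ∀ f : ℕ → ℕ, rowMultiset f B =
        ((List.range B).map (fun j => f (j + 1)) : Multiset ℕ) := by
      intro f; rfl
    rw [hcoe P, hcoe Q, Multiset.coe_eq_coe] at hm
    have hsorted : ∀ f : ℕ → ℕ, IsPartition f →
        List.Pairwise (· ≥ ·) ((List.range B).map (fun j => f (j + 1))) := by
      intro f hf
      rw [List.pairwise_map]
      exact (List.pairwise_lt_range (n := B)).imp (fun {a b} hab =>
        part_anti hf (Nat.succ_le_succ (Nat.zero_le a)) (by omega))
    have heq := List.Perm.eq_of_pairwise' (hsorted P hP) (hsorted Q hQ) hm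
    have h1 := congrArg (fun L : List ℕ => L[i]?) heq
    simpa [List.getElem?_range, hiB] using h1

lemma mem_rowMultiset {M : ℕ → ℕ} {k B : ℕ} (hk : 1 ≤ k) (hkB : k ≤ B) :
    M k ∈ rowMultiset M B :=
  Multiset.mem_map.2 ⟨k - 1, by simp [Multiset.mem_range]; omega, by congr 1; omega⟩

lemma main_glue (M N N₀ : ℕ → ℕ) (k k' C B₀ : ℕ) (hM : IsPartition M) (hN : IsPartition N)
    (hN₀ : IsPartition N₀) (hk : 1 ≤ k) (hk' : 1 ≤ k')
    (hB : ∀ B, B₀ ≤ B → rowMultiset N B = flipLength M k ::ₘ (rowMultiset M B).erase (M k))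
    (hmult : ∀ B, C ≤ B → (M k ::ₘ rowMultiset N₀ B) = flipLength M k ::ₘ rowMultiset M B)
    (hfl : flipLength N₀ k' = M k) (hval : N₀ k' = flipLength M k) :
    ∃ k'', DiagramFlip N k'' M := by
  have hNN₀ : N = N₀ := by
    refine partition_ext _ _ hN hN₀ ⟨max B₀ (max C k), fun B hB' => ?_⟩
    have h1 := hB B (le_trans (le_max_left _ _) hB')
    have h2 := hmult B (le_trans (le_trans (le_max_left _ _) (le_max_right _ _)) hB')
    have hmem := mem_rowMultiset (M := M) hk
      (le_trans (le_trans (le_max_right _ _) (le_max_right _ _)) hB')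
    have h3 : M k ::ₘ rowMultiset N B = M k ::ₘ rowMultiset N₀ B := by
      rw [h1, h2, Multiset.cons_swap, Multiset.cons_erase hmem]
    exact (Multiset.cons_inj_right _).mp h3
  subst hNN₀
  refine ⟨k', hN, hM, hk', max B₀ k, fun B hB' => ?_⟩
  rw [hfl, hval, hB B (le_trans (le_max_left _ _) hB'), Multiset.erase_cons_head,
    Multiset.cons_erase (mem_rowMultiset hk (le_trans (le_max_right _ _) hB'))]


/-- The diagram flip operation is an involution: if `N` is obtained from `M` by
a flip in row `k` (in particular in the case `μ_{k+1} = μ_k`), then `M` is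
obtained back from `N` by a flip in the appropriate row, and vice versa. -/
theorem diagramFlip_involutive (M N : ℕ → ℕ) (k : ℕ)
    (h : DiagramFlip M k N) :
    ∃ k', DiagramFlip N k' M := by
  obtain ⟨hM, hN, hk, B₀, hB⟩ := h
  by_cases hcase : M (k + 1) = M k
  · -- Case 1 : μ_{k+1} = μ_k ; flip length is k + μ_k - max T_k
    obtain ⟨t, ht1, ht2, ht3, hfl⟩ :
        ∃ t, t < k ∧ (1 ≤ t → k + M k ≤ t + M t) ∧
          (∀ m, t < m → m < k → m + M m < k + M k) ∧ flipLength M k = k + M k - t := by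
      by_cases hne : ((Finset.Ico 1 k).filter (fun m => k + M k ≤ m + M m)).Nonempty
      · refine ⟨((Finset.Ico 1 k).filter (fun m => k + M k ≤ m + M m)).max' hne, ?_, ?_, ?_, ?_⟩
        · have hmem := Finset.max'_mem _ hne
          simp only [Finset.mem_filter, Finset.mem_Ico] at hmem
          exact hmem.1.2
        · have hmem := Finset.max'_mem _ hne
          simp only [Finset.mem_filter, Finset.mem_Ico] at hmem
          exact fun _ => hmem.2
        · intro m hm1 hm2
          by_contra hcon
          have hmm : m ∈ (Finset.Ico 1 k).filter (fun m => k + M k ≤ m + M m) := by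
            simp only [Finset.mem_filter, Finset.mem_Ico]
            omega
          have := Finset.le_max' _ _ hmm
          omega
        · simp only [flipLength]
          rw [if_pos hcase, dif_pos hne]
      · refine ⟨0, by omega, by omega, ?_, ?_⟩
        · intro m hm1 hm2
          by_contra hcon
          exact hne ⟨m, by simp only [Finset.mem_filter, Finset.mem_Ico]; omega⟩
        · simp only [flipLength]
          rw [if_pos hcase, dif_neg hne]
          omega
    -- abbreviations
    have hak : k ≤ k + M k := Nat.le_add_right _ _
    set l := k + M k - t with hldef
    have htl : t + l = k + M k := by omega
    have hlk : M k < l := by omega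
    set N₀ : ℕ → ℕ := fun j => if j = t + 1 then l else
        if t + 1 < j ∧ j ≤ k then M (j - 1) else M j with hN₀def
    have hN₀t : N₀ (t + 1) = l := by simp [hN₀def]
    have hN₀lo : ∀ j, j ≤ t → N₀ j = M j := by
      intro j hj
      simp only [hN₀def]
      rw [if_neg (by omega), if_neg (by omega)]
    have hN₀mid : ∀ j, t + 1 < j → j ≤ k → N₀ j = M (j - 1) := by
      intro j h1 h2
      simp only [hN₀def]
      rw [if_neg (by omega), if_pos ⟨h1, h2⟩]
    have hN₀hi : ∀ j, k < j → N₀ j = M j := by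
      intro j h1
      simp only [hN₀def]
      rw [if_neg (by omega), if_neg (by omega)]
    have hN₀k1 : N₀ (k + 1) = M k := by rw [hN₀hi (k + 1) (by omega), hcase]
    have hmidlt : ∀ j, t + 1 < j → j ≤ k → N₀ j < l := by
      intro j h1 h2
      rw [hN₀mid j h1 h2]
      have := ht3 (j - 1) (by omega) (by omega)
      omega
    have hsucclt : N₀ (t + 1 + 1) < l := by
      by_cases hc : t + 1 < k
      · exact hmidlt (t + 2) (by omega) (by omega)
      · have : t + 1 = k := by omega
        rw [show t + 1 + 1 = k + 1 by omega, hN₀k1]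
        omega
    have hN₀part : IsPartition N₀ := by
      refine ⟨by rw [hN₀lo 0 (by omega)]; exact hM.1, ?_, ?_⟩
      · intro j hj
        rcases Nat.lt_or_ge (j + 1) (t + 1) with hc | hc
        · rw [hN₀lo (j + 1) (by omega), hN₀lo j (by omega)]
          exact hM.2.1 j hj
        rcases Nat.eq_or_lt_of_le hc with hc2 | hc2
        · rw [← hc2, hN₀t, hN₀lo j (by omega)]
          have := ht2 (by omega)
          have : l ≤ M t := by omega
          have hjt : j = t := by omega
          rw [hjt]
          omega
        rcases Nat.eq_or_lt_of_le hc2 with hc3 | hc3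
        · -- j = t + 1
          have hjt : j = t + 1 := by omega
          rw [hjt, hN₀t]
          have := hsucclt
          rw [hjt] at *
          omega
        rcases Nat.lt_or_ge j k with hc4 | hc4
        · -- t + 1 < j < k   (so j+1 ≤ k)
          rw [hN₀mid (j + 1) (by omega) (by omega), hN₀mid j (by omega) hc4.le]
          exact part_anti hM (by omega) (by omega)
        rcases Nat.eq_or_lt_of_le hc4 with hc5 | hc5
        · -- j = k  (and k > t + 1 here since j + 1 > t + 2)
          rw [← hc5, hN₀hi (k + 1) (by omega), hN₀mid k (by omega) (by omega)]
          exact part_anti hM (by omega) (by omega)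
        · rw [hN₀hi (j + 1) (by omega), hN₀hi j (by omega)]
          exact hM.2.1 j hj
      · obtain ⟨Bf, hBf⟩ := hM.2.2
        exact ⟨Bf + k + 1, fun j hj => by
          rw [hN₀hi j (by omega)]; exact hBf j (by omega)⟩
    have hmult : ∀ B, k ≤ B → (M k ::ₘ rowMultiset N₀ B) = flipLength M k ::ₘ rowMultiset M B := by
      intro B hkB
      rw [hfl, rowMultiset_eq_sum, rowMultiset_eq_sum,
        ← Multiset.singleton_add, ← Multiset.singleton_add]
      have splitN : ∑ j ∈ Finset.Ico 1 (B + 1), ({N₀ j} : Multiset ℕ) =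
          (∑ j ∈ Finset.Ico 1 (t + 1), ({N₀ j} : Multiset ℕ)) +
          (∑ j ∈ Finset.Ico (t + 1) (t + 2), ({N₀ j} : Multiset ℕ)) +
          (∑ j ∈ Finset.Ico (t + 2) (k + 1), ({N₀ j} : Multiset ℕ)) +
          (∑ j ∈ Finset.Ico (k + 1) (B + 1), ({N₀ j} : Multiset ℕ)) := by
        rw [Finset.sum_Ico_consecutive _ (by omega : 1 ≤ t + 1) (by omega : t + 1 ≤ t + 2),
          Finset.sum_Ico_consecutive _ (by omega : 1 ≤ t + 2) (by omega : t + 2 ≤ k + 1),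
          Finset.sum_Ico_consecutive _ (by omega : 1 ≤ k + 1) (by omega : k + 1 ≤ B + 1)]
      have splitM : ∑ j ∈ Finset.Ico 1 (B + 1), ({M j} : Multiset ℕ) =
          (∑ j ∈ Finset.Ico 1 (t + 1), ({M j} : Multiset ℕ)) +
          (∑ j ∈ Finset.Ico (t + 1) k, ({M j} : Multiset ℕ)) +
          (∑ j ∈ Finset.Ico k (k + 1), ({M j} : Multiset ℕ)) +
          (∑ j ∈ Finset.Ico (k + 1) (B + 1), ({M j} : Multiset ℕ)) := by
        rw [Finset.sum_Ico_consecutive _ (by omega : 1 ≤ t + 1) (by omega : t + 1 ≤ k),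
          Finset.sum_Ico_consecutive _ (by omega : 1 ≤ k) (by omega : k ≤ k + 1),
          Finset.sum_Ico_consecutive _ (by omega : 1 ≤ k + 1) (by omega : k + 1 ≤ B + 1)]
      have e1 : ∑ j ∈ Finset.Ico 1 (t + 1), ({N₀ j} : Multiset ℕ) =
          ∑ j ∈ Finset.Ico 1 (t + 1), ({M j} : Multiset ℕ) :=
        Finset.sum_congr rfl (fun j hj => by
          rw [hN₀lo j (by simp only [Finset.mem_Ico] at hj; omega)])
      have e2 : ∑ j ∈ Finset.Ico (t + 1) (t + 2), ({N₀ j} : Multiset ℕ) = {l} := by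
        rw [Finset.sum_Ico_eq_sum_range]
        simp [hN₀t]
      have e3 : ∑ j ∈ Finset.Ico (t + 2) (k + 1), ({N₀ j} : Multiset ℕ) =
          ∑ j ∈ Finset.Ico (t + 1) k, ({M j} : Multiset ℕ) := by
        rw [← sum_shift (fun j => ({M j} : Multiset ℕ)) (t + 1) k]
        exact Finset.sum_congr rfl (fun j hj => by
          rw [hN₀mid j (by simp only [Finset.mem_Ico] at hj; omega)
            (by simp only [Finset.mem_Ico] at hj; omega)])
      have e4 : ∑ j ∈ Finset.Ico (k + 1) (B + 1), ({N₀ j} : Multiset ℕ) =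
          ∑ j ∈ Finset.Ico (k + 1) (B + 1), ({M j} : Multiset ℕ) :=
        Finset.sum_congr rfl (fun j hj => by
          rw [hN₀hi j (by simp only [Finset.mem_Ico] at hj; omega)])
      have e5 : ∑ j ∈ Finset.Ico k (k + 1), ({M j} : Multiset ℕ) = {M k} := by
        rw [Finset.sum_Ico_eq_sum_range]
        simp
      rw [splitN, splitM, e1, e2, e3, e4, e5]
      abel
    -- computing the flip length of N₀ in row t+1
    have hflN : flipLength N₀ (t + 1) = M k := by
      have hne' : {m : ℕ | t + 1 < m ∧ (t + 1) + N₀ (t + 1) ≤ m + N₀ m}.Nonempty := by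
        refine ⟨k + 1, by omega, ?_⟩
        rw [hN₀t, hN₀k1]
        omega
      have hlb : ∀ m ∈ {m : ℕ | t + 1 < m ∧ (t + 1) + N₀ (t + 1) ≤ m + N₀ m}, k + 1 ≤ m := by
        rintro m ⟨hm1, hm2⟩
        by_contra hcon
        have hmk : m ≤ k := by omega
        rw [hN₀t] at hm2
        have := hmidlt m (by omega) hmk
        have := ht3 (m - 1) (by omega) (by omega)
        rw [hN₀mid m (by omega) hmk] at hm2
        omega
      have hsInf : sInf {m : ℕ | t + 1 < m ∧ (t + 1) + N₀ (t + 1) ≤ m + N₀ m} = k + 1 := by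
        refine le_antisymm (Nat.sInf_le ?_) (le_csInf hne' hlb)
        refine ⟨by omega, ?_⟩
        rw [hN₀t, hN₀k1]
        omega
      simp only [flipLength]
      rw [if_neg (by rw [hN₀t]; omega : ¬ N₀ (t + 1 + 1) = N₀ (t + 1)), dif_pos hne', hsInf,
        hN₀t]
      omega
    exact main_glue M N N₀ k (t + 1) k B₀ hM hN hN₀part hk (by omega) hB hmult hflN
      (by rw [hN₀t, hfl])
  · -- Case 2 : μ_{k+1} < μ_k ; flip length is k + μ_k - min T_k
    have hlt : M (k + 1) < M k := lt_of_le_of_ne (hM.2.1 k hk) hcase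
    have hne2 : {m : ℕ | k < m ∧ k + M k ≤ m + M m}.Nonempty :=
      ⟨k + M k, by constructor <;> omega⟩
    set s := sInf {m : ℕ | k < m ∧ k + M k ≤ m + M m} with hsdef
    have hsmem := Nat.sInf_mem hne2
    obtain ⟨hks, hsge⟩ : k < s ∧ k + M k ≤ s + M s := hsmem
    have hsa : s ≤ k + M k := Nat.sInf_le ⟨by omega, by omega⟩
    have hmin : ∀ m, k < m → m < s → m + M m < k + M k := by
      intro m h1 h2
      have := Nat.notMem_of_lt_sInf (hsdef ▸ h2)
      simp only [Set.mem_setOf_eq, not_and, not_le] at this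
      exact this h1
    have hfl : flipLength M k = k + M k - s := by
      simp only [flipLength]
      rw [if_neg hcase, dif_pos hne2]
    set l := k + M k - s with hldef
    have hMs : M s = l := by
      refine le_antisymm ?_ (by omega)
      by_cases hs1 : s = k + 1
      · rw [hs1]; omega
      · have h1 := hmin (s - 1) (by omega) (by omega)
        have h2 : M s ≤ M (s - 1) := part_anti hM (i := s - 1) (j := s) (by omega) (by omega)
        omega
    set N₀ : ℕ → ℕ := fun j => if k ≤ j ∧ j < s then M (j + 1) else M j with hN₀def
    have hN₀lo : ∀ j, j < k → N₀ j = M j := by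
      intro j hj
      simp only [hN₀def]
      rw [if_neg (by omega)]
    have hN₀mid : ∀ j, k ≤ j → j < s → N₀ j = M (j + 1) := by
      intro j h1 h2
      simp only [hN₀def]
      rw [if_pos ⟨h1, h2⟩]
    have hN₀hi : ∀ j, s ≤ j → N₀ j = M j := by
      intro j hj
      simp only [hN₀def]
      rw [if_neg (by omega)]
    have hN₀s1 : N₀ (s - 1) = l := by
      rw [hN₀mid (s - 1) (by omega) (by omega), show s - 1 + 1 = s by omega, hMs]
    have hN₀s : N₀ s = l := by rw [hN₀hi s le_rfl, hMs]
    have hN₀part : IsPartition N₀ := by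
      refine ⟨by rw [hN₀lo 0 (by omega)]; exact hM.1, ?_, ?_⟩
      · intro j hj
        rcases Nat.lt_or_ge (j + 1) k with hc | hc
        · rw [hN₀lo (j + 1) hc, hN₀lo j (by omega)]
          exact hM.2.1 j hj
        rcases Nat.eq_or_lt_of_le hc with hc2 | hc2
        · rw [← hc2, hN₀mid k le_rfl (by omega), hN₀lo j (by omega)]
          exact part_anti hM (by omega) (by omega)
        rcases Nat.lt_or_ge (j + 1) s with hc3 | hc3
        · rw [hN₀mid (j + 1) (by omega) hc3, hN₀mid j (by omega) (by omega)]
          exact part_anti hM (by omega) (by omega)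
        rcases Nat.eq_or_lt_of_le hc3 with hc4 | hc4
        · rw [← hc4, hN₀s, show N₀ j = l from by
            rw [hN₀mid j (by omega) (by omega), show j + 1 = s by omega, hMs]]
        · rw [hN₀hi (j + 1) (by omega), hN₀hi j (by omega)]
          exact hM.2.1 j hj
      · obtain ⟨Bf, hBf⟩ := hM.2.2
        exact ⟨Bf + s + 1, fun j hj => by
          rw [hN₀hi j (by omega)]; exact hBf j (by omega)⟩
    have hmult : ∀ B, s ≤ B → (M k ::ₘ rowMultiset N₀ B) = flipLength M k ::ₘ rowMultiset M B := by
      intro B hsB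
      rw [hfl, rowMultiset_eq_sum, rowMultiset_eq_sum,
        ← Multiset.singleton_add, ← Multiset.singleton_add]
      have splitN : ∑ j ∈ Finset.Ico 1 (B + 1), ({N₀ j} : Multiset ℕ) =
          (∑ j ∈ Finset.Ico 1 k, ({N₀ j} : Multiset ℕ)) +
          (∑ j ∈ Finset.Ico k s, ({N₀ j} : Multiset ℕ)) +
          (∑ j ∈ Finset.Ico s (s + 1), ({N₀ j} : Multiset ℕ)) +
          (∑ j ∈ Finset.Ico (s + 1) (B + 1), ({N₀ j} : Multiset ℕ)) := by
        rw [Finset.sum_Ico_consecutive _ (by omega : 1 ≤ k) (by omega : k ≤ s),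
          Finset.sum_Ico_consecutive _ (by omega : 1 ≤ s) (by omega : s ≤ s + 1),
          Finset.sum_Ico_consecutive _ (by omega : 1 ≤ s + 1) (by omega : s + 1 ≤ B + 1)]
      have splitM : ∑ j ∈ Finset.Ico 1 (B + 1), ({M j} : Multiset ℕ) =
          (∑ j ∈ Finset.Ico 1 k, ({M j} : Multiset ℕ)) +
          (∑ j ∈ Finset.Ico k (k + 1), ({M j} : Multiset ℕ)) +
          (∑ j ∈ Finset.Ico (k + 1) (s + 1), ({M j} : Multiset ℕ)) +
          (∑ j ∈ Finset.Ico (s + 1) (B + 1), ({M j} : Multiset ℕ)) := by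
        rw [Finset.sum_Ico_consecutive _ (by omega : 1 ≤ k) (by omega : k ≤ k + 1),
          Finset.sum_Ico_consecutive _ (by omega : 1 ≤ k + 1) (by omega : k + 1 ≤ s + 1),
          Finset.sum_Ico_consecutive _ (by omega : 1 ≤ s + 1) (by omega : s + 1 ≤ B + 1)]
      have e1 : ∑ j ∈ Finset.Ico 1 k, ({N₀ j} : Multiset ℕ) =
          ∑ j ∈ Finset.Ico 1 k, ({M j} : Multiset ℕ) :=
        Finset.sum_congr rfl (fun j hj => by
          rw [hN₀lo j (by simp only [Finset.mem_Ico] at hj; omega)])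
      have e2 : ∑ j ∈ Finset.Ico k s, ({N₀ j} : Multiset ℕ) =
          ∑ j ∈ Finset.Ico (k + 1) (s + 1), ({M j} : Multiset ℕ) := by
        calc ∑ j ∈ Finset.Ico k s, ({N₀ j} : Multiset ℕ)
            = ∑ j ∈ Finset.Ico k s, ({M (j + 1)} : Multiset ℕ) :=
              Finset.sum_congr rfl (fun j hj => by
                rw [hN₀mid j (by simp only [Finset.mem_Ico] at hj; omega)
                  (by simp only [Finset.mem_Ico] at hj; omega)])
          _ = ∑ j ∈ Finset.Ico (k + 1) (s + 1), ({M (j - 1 + 1)} : Multiset ℕ) :=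
              (sum_shift (fun j => ({M (j + 1)} : Multiset ℕ)) k s).symm
          _ = ∑ j ∈ Finset.Ico (k + 1) (s + 1), ({M j} : Multiset ℕ) :=
              Finset.sum_congr rfl (fun j hj => by
                have := Finset.mem_Ico.1 hj
                rw [show j - 1 + 1 = j by omega])
      have e3 : ∑ j ∈ Finset.Ico s (s + 1), ({N₀ j} : Multiset ℕ) = {l} := by
        rw [Finset.sum_Ico_eq_sum_range]
        simp [hN₀s]
      have e4 : ∑ j ∈ Finset.Ico (s + 1) (B + 1), ({N₀ j} : Multiset ℕ) =
          ∑ j ∈ Finset.Ico (s + 1) (B + 1), ({M j} : Multiset ℕ) :=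
        Finset.sum_congr rfl (fun j hj => by
          rw [hN₀hi j (by simp only [Finset.mem_Ico] at hj; omega)])
      have e5 : ∑ j ∈ Finset.Ico k (k + 1), ({M j} : Multiset ℕ) = {M k} := by
        rw [Finset.sum_Ico_eq_sum_range]
        simp
      rw [splitN, splitM, e1, e2, e3, e4, e5]
      abel
    have hnotk : ∀ m, k ≤ m → m < s - 1 → ¬ ((s - 1) + N₀ (s - 1) ≤ m + N₀ m) := by
      intro m h1 h2 hcon
      rw [hN₀s1, hN₀mid m h1 (by omega)] at hcon
      have := hmin (m + 1) (by omega) (by omega)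
      omega
    have hflN : flipLength N₀ (s - 1) = M k := by
      have hcond : N₀ (s - 1 + 1) = N₀ (s - 1) := by
        rw [show s - 1 + 1 = s by omega, hN₀s, hN₀s1]
      simp only [flipLength]
      rw [if_pos hcond]
      by_cases hk2 : 2 ≤ k
      · have hmemF : k - 1 ∈ (Finset.Ico 1 (s - 1)).filter
            (fun m => (s - 1) + N₀ (s - 1) ≤ m + N₀ m) := by
          simp only [Finset.mem_filter, Finset.mem_Ico]
          refine ⟨⟨by omega, by omega⟩, ?_⟩
          rw [hN₀s1, hN₀lo (k - 1) (by omega)]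
          have := part_anti hM (i := k - 1) (j := k) (by omega) (by omega)
          omega
        have hne' : ((Finset.Ico 1 (s - 1)).filter
            (fun m => (s - 1) + N₀ (s - 1) ≤ m + N₀ m)).Nonempty := ⟨_, hmemF⟩
        rw [dif_pos hne']
        have hmax : ((Finset.Ico 1 (s - 1)).filter
            (fun m => (s - 1) + N₀ (s - 1) ≤ m + N₀ m)).max' hne' = k - 1 := by
          refine le_antisymm (Finset.max'_le _ _ _ ?_) (Finset.le_max' _ _ hmemF)
          intro m hm
          simp only [Finset.mem_filter, Finset.mem_Ico] at hm
          by_contra hcon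
          exact hnotk m (by omega) (by omega) hm.2
        rw [hmax, hN₀s1]
        omega
      · rw [dif_neg (by
          rintro ⟨m, hm⟩
          simp only [Finset.mem_filter, Finset.mem_Ico] at hm
          exact hnotk m (by omega) (by omega) hm.2), hN₀s1]
        omega
    exact main_glue M N N₀ k (s - 1) s B₀ hM hN hN₀part hk (by omega) hB hmult hflN
      (by rw [hN₀s1, hfl])
end
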